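/- arXiv:2312.05115 — 7 statements merged into one kernel-verified Lean document; each statement's English description precedes it below -/
import Mathlib

section
/- Let f be a monic polynomial of degree d ≥ 2 over ℂ, let Ω = {z ∈ ℂ : dist(z, K_f) ≤ 1} where K_f is the filled Julia set, suppose f has Lipschitz constant A > 1 on Ω and the escape-rate (Green's) function G_f is bounded by M > 0 on Ω. Then for all z ∈ Ω, G_f(z) ≤ d·M·dist(z, K_f)^α, where α = log d / log A. -/
/-- Hölder-type bound `G_f(z) ≤ d·M·dist(z, K_f)^α` on the
neighborhood `Ω = {z : dist(z, K_f) ≤ 1}` of the filled Julia set. -/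
theorem stmt2 (d : ℕ) (hd : 2 ≤ d) (f : ℂ → ℂ) (G : ℂ → ℝ) (K : Set ℂ)
    (hK : K = {z | ∃ C, ∀ n, ‖f^[n] z‖ ≤ C})
    (A M α : ℝ) (hA : 1 < A) (hM : 0 < M) (hα : α = Real.log d / Real.log A)
    (hGf : ∀ z, G (f z) = d * G z)
    (hG0 : ∀ z, G z = 0 ↔ z ∈ K)
    (hGnonneg : ∀ z, 0 ≤ G z)
    (hinv : ∀ z ∈ K, f z ∈ K)
    (hLip : ∀ z w : ℂ, Metric.infDist z K ≤ 1 → Metric.infDist w K ≤ 1 →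
      ‖f z - f w‖ ≤ A * ‖z - w‖)
    (hGM : ∀ z : ℂ, Metric.infDist z K ≤ 1 → G z ≤ M) :
    ∀ z : ℂ, Metric.infDist z K ≤ 1 → G z ≤ d * M * (Metric.infDist z K) ^ α := by
  have hd1 : (1:ℝ) < (d:ℝ) := by exact_mod_cast (by omega : 1 < d)
  have hd0 : (0:ℝ) < (d:ℝ) := by positivity
  have hA0 : (0:ℝ) < A := lt_trans one_pos hA
  have hlogA : 0 < Real.log A := Real.log_pos hA
  have hlogd : 0 < Real.log d := Real.log_pos hd1
  have hαpos : 0 < α := hα ▸ div_pos hlogd hlogA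
  have hGiter : ∀ (n : ℕ) (z : ℂ), G (f^[n] z) = (d:ℝ)^n * G z := by
    intro n z
    induction n with
    | zero => simp
    | succ n ih => rw [Function.iterate_succ_apply', hGf, ih]; ring
  have hzero : ∀ z : ℂ, (∀ n : ℕ, (d:ℝ)^n * G z ≤ M) → G z = 0 := by
    intro z h
    by_contra hne
    have hpos : 0 < G z := lt_of_le_of_ne (hGnonneg z) (Ne.symm hne)
    obtain ⟨n, hn⟩ := pow_unbounded_of_one_lt (M / G z) hd1
    have hlt : M < (d:ℝ)^n * G z := by
      rw [div_lt_iff₀ hpos] at hn; linarith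
    exact absurd (h n) (not_le.mpr hlt)
  have hKne : K.Nonempty := by
    rcases Set.eq_empty_or_nonempty K with hKe | h
    · exfalso
      have hinf : ∀ w : ℂ, Metric.infDist w K = 0 := by
        intro w; rw [hKe]; exact Metric.infDist_empty
      have h0 : G 0 = 0 := hzero 0 (fun n => by
        rw [← hGiter]; exact hGM _ (by rw [hinf]; norm_num))
      have hmem : (0:ℂ) ∈ K := (hG0 0).mp h0
      rw [hKe] at hmem; exact hmem
    · exact h
  have hstep : ∀ w : ℂ, Metric.infDist w K ≤ 1 →
      Metric.infDist (f w) K ≤ A * Metric.infDist w K := by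
    intro w hw
    refine le_of_forall_pos_le_add ?_
    intro ε hε
    have hεA : 0 < ε / A := div_pos hε hA0
    obtain ⟨k, hk, hdk⟩ := (Metric.infDist_lt_iff hKne).mp
      (show Metric.infDist w K < Metric.infDist w K + ε/A by linarith)
    have hk1 : Metric.infDist k K ≤ 1 := by
      rw [Metric.infDist_zero_of_mem hk]; norm_num
    have hfk : f k ∈ K := hinv k hk
    calc Metric.infDist (f w) K ≤ dist (f w) (f k) := Metric.infDist_le_dist_of_mem hfk
      _ = ‖f w - f k‖ := Complex.dist_eq _ _
      _ ≤ A * ‖w - k‖ := hLip w k hw hk1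
      _ = A * dist w k := by rw [Complex.dist_eq]
      _ ≤ A * (Metric.infDist w K + ε/A) := by
          apply mul_le_mul_of_nonneg_left hdk.le hA0.le
      _ = A * Metric.infDist w K + ε := by field_simp
  intro z hz
  set t := Metric.infDist z K with ht
  have ht0 : 0 ≤ t := Metric.infDist_nonneg
  have hiter : ∀ n : ℕ, (∀ k, k < n → A^k * t ≤ 1) →
      Metric.infDist (f^[n] z) K ≤ A^n * t := by
    intro n
    induction n with
    | zero => intro _; simp [ht]
    | succ n ih =>
      intro hsmall
      have ih' := ih (fun k hk => hsmall k (Nat.lt_succ_of_lt hk))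
      have hle1 : Metric.infDist (f^[n] z) K ≤ 1 :=
        ih'.trans (hsmall n (Nat.lt_succ_self n))
      calc Metric.infDist (f^[n+1] z) K
          = Metric.infDist (f (f^[n] z)) K := by rw [Function.iterate_succ_apply']
        _ ≤ A * Metric.infDist (f^[n] z) K := hstep _ hle1
        _ ≤ A * (A^n * t) := mul_le_mul_of_nonneg_left ih' hA0.le
        _ = A^(n+1) * t := by ring
  rcases eq_or_lt_of_le ht0 with htz | htpos
  · -- t = 0
    have hGz : G z = 0 := by
      apply hzero
      intro n
      rw [← hGiter]
      apply hGM
      have := hiter n (fun k _ => by rw [← htz]; simp)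
      rw [← htz] at this
      simp at this
      linarith [Metric.infDist_nonneg (x := f^[n] z) (s := K)]
    rw [hGz, ← htz, Real.zero_rpow hαpos.ne']
    simp
  · -- 0 < t
    have hex : ∃ m, 1 < A^(m+1) * t := by
      obtain ⟨m, hm⟩ := pow_unbounded_of_one_lt (1/t) hA
      refine ⟨m, ?_⟩
      have hAm : A^m ≤ A^(m+1) := pow_le_pow_right₀ hA.le (Nat.le_succ m)
      have : 1/t < A^(m+1) := lt_of_lt_of_le hm hAm
      rw [div_lt_iff₀ htpos] at this
      nlinarith
    set n := Nat.find hex with hn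
    have hn1 : 1 < A^(n+1) * t := Nat.find_spec hex
    have hkle : ∀ k, k ≤ n → A^k * t ≤ 1 := by
      intro k hk
      match k with
      | 0 => simpa using hz
      | (j+1) =>
        have hjn : j < n := by omega
        have := Nat.find_min hex hjn
        linarith [not_lt.mp this]
    have hItn : Metric.infDist (f^[n] z) K ≤ 1 :=
      (hiter n (fun k hk => hkle k hk.le)).trans (hkle n le_rfl)
    have hGn : (d:ℝ)^n * G z ≤ M := by rw [← hGiter]; exact hGM _ hItn
    have hGz : G z ≤ M / (d:ℝ)^n := by
      rw [le_div_iff₀ (pow_pos hd0 n)]; linarith [mul_comm ((d:ℝ)^n) (G z)]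
    have hpowpos : 0 < A^(n+1) := pow_pos hA0 _
    have hlt : 1 / A^(n+1) < t := by
      rw [div_lt_iff₀ hpowpos]
      rw [mul_comm]; exact hn1
    have hαA : α * Real.log A = Real.log d := by
      rw [hα]; field_simp
    have hcalc : ((1 / A^(n+1) : ℝ)) ^ α = 1 / (d:ℝ)^(n+1) := by
      have h1 : (1 / A ^ (n+1) : ℝ) = A ^ (-((n:ℝ)+1)) := by
        rw [Real.rpow_neg hA0.le, one_div]
        congr 1
        rw [← Real.rpow_natCast A (n+1)]
        push_cast
        ring_nf
      have h2 : (1 / (d:ℝ) ^ (n+1) : ℝ) = (d:ℝ) ^ (-((n:ℝ)+1)) := by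
        rw [Real.rpow_neg hd0.le, one_div]
        congr 1
        rw [← Real.rpow_natCast (d:ℝ) (n+1)]
        push_cast
        ring_nf
      rw [h1, h2, ← Real.rpow_mul hA0.le,
        Real.rpow_def_of_pos hA0, Real.rpow_def_of_pos hd0]
      congr 1
      calc Real.log A * (-((n:ℝ)+1) * α) = -((n:ℝ)+1) * (α * Real.log A) := by ring
        _ = Real.log d * (-((n:ℝ)+1)) := by rw [hαA]; ring
    have h2 : 1/(d:ℝ)^(n+1) ≤ t ^ α := by
      rw [← hcalc]
      exact Real.rpow_le_rpow (by positivity) hlt.le hαpos.le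
    have h3 : (d:ℝ)*M*(1/(d:ℝ)^(n+1)) ≤ (d:ℝ)*M*t^α :=
      mul_le_mul_of_nonneg_left h2 (by positivity)
    have heq : (d:ℝ)*M*(1/(d:ℝ)^(n+1)) = M / (d:ℝ)^n := by
      field_simp
      ring
    linarith [heq ▸ h3]
end

section
/- Let |·| be a non-archimedean absolute value on a field, and let f(z) = z^d + a_{d-1}z^{d-1} + ... + a_0 with d ≥ 2 satisfy |a_i| ≤ 1 for all i ≥ 1 and |a_0| > 1. Then every point z in the filled Julia set of f satisfies |z| = |a_0|^{1/d}. Equivalently, if |z| ≠ |a_0|^{1/d} then |f^n(z)| → ∞. -/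
open Filter

private lemma na_sum_lt {L : Type*} [Field L] (v : AbsoluteValue L ℝ)
    (hna : ∀ x y : L, v (x + y) ≤ max (v x) (v y))
    {ι : Type*} (s : Finset ι) (g : ι → L) {M : ℝ} (hM : 0 < M)
    (h : ∀ i ∈ s, v (g i) < M) : v (∑ i ∈ s, g i) < M := by
  classical
  induction s using Finset.cons_induction with
  | empty => simpa using hM
  | cons i s hi ih =>
      rw [Finset.sum_cons]
      refine lt_of_le_of_lt (hna _ _) (max_lt ?_ ?_)
      · exact h i (Finset.mem_cons_self i s)
      · exact ih fun j hj => h j (Finset.mem_cons_of_mem hj)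

private lemma na_add_eq {L : Type*} [Field L] (v : AbsoluteValue L ℝ)
    (hna : ∀ x y : L, v (x + y) ≤ max (v x) (v y))
    {x y : L} (h : v y < v x) : v (x + y) = v x := by
  refine le_antisymm ((hna x y).trans_eq (max_eq_left h.le)) ?_
  have h2 : v x ≤ max (v (x + y)) (v y) := by
    have := hna (x + y) (-y)
    simpa using this
  rcases le_max_iff.mp h2 with h3 | h3
  · exact h3
  · exact absurd h3 (not_le.mpr h)

/-- if `|a_i| ≤ 1` for `i ≥ 1` and `|a_0| > 1` (non-archimedean),
then every point of the filled Julia set has `|z| = |a_0|^{1/d}`; equivalently,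
`|z| ≠ |a_0|^{1/d}` implies the orbit escapes to infinity. -/
theorem stmt4 {L : Type*} [Field L] (v : AbsoluteValue L ℝ)
    (hna : ∀ x y : L, v (x + y) ≤ max (v x) (v y))
    (d : ℕ) (hd : 2 ≤ d) (a : ℕ → L) (f : L → L)
    (hf : ∀ z, f z = z ^ d + ∑ i ∈ Finset.range d, a i * z ^ i)
    (ha : ∀ i, 1 ≤ i → i < d → v (a i) ≤ 1) (ha0 : 1 < v (a 0)) :
    (∀ z : L, (∃ C, ∀ n, v (f^[n] z) ≤ C) → v z = v (a 0) ^ ((1 : ℝ) / d)) ∧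
    (∀ z : L, v z ≠ v (a 0) ^ ((1 : ℝ) / d) →
      Tendsto (fun n => v (f^[n] z)) atTop atTop) := by
  set c : ℝ := v (a 0) with hc
  set r : ℝ := c ^ ((1 : ℝ) / d) with hr
  have hc0 : 0 < c := lt_trans one_pos ha0
  have hd0 : 0 < d := lt_of_lt_of_le two_pos hd
  have hr1 : 1 < r := Real.one_lt_rpow_iff_of_pos hc0 |>.mpr
    (Or.inl ⟨ha0, by positivity⟩)
  have hr0 : 0 < r := lt_trans one_pos hr1
  have hrd : r ^ d = c := by
    rw [hr, ← Real.rpow_natCast (c ^ ((1:ℝ)/d)) d, ← Real.rpow_mul hc0.le]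
    rw [one_div, inv_mul_cancel₀ (by exact_mod_cast hd0.ne'), Real.rpow_one]
  have hrc : r < c := by
    calc r = r ^ 1 := (pow_one r).symm
    _ < r ^ d := pow_lt_pow_right₀ hr1 (by omega)
    _ = c := hrd
  -- Lemma B: if r < v w then v (f w) = (v w) ^ d
  have lemB : ∀ w : L, r < v w → v (f w) = v w ^ d := by
    intro w hw
    have hw1 : 1 < v w := lt_trans hr1 hw
    have hpow : 0 < v w ^ d := by positivity
    rw [hf w]
    rw [na_add_eq v hna, v.map_pow]
    rw [v.map_pow]
    refine na_sum_lt v hna _ _ hpow ?_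
    intro i hi
    rw [Finset.mem_range] at hi
    rw [v.map_mul, v.map_pow]
    rcases Nat.eq_zero_or_pos i with h0 | h1
    · subst h0
      simp only [pow_zero, mul_one]
      calc v (a 0) = c := rfl
      _ = r ^ d := hrd.symm
      _ < v w ^ d := by
          exact pow_lt_pow_left₀ hw hr0.le (by omega)
    · calc v (a i) * v w ^ i ≤ 1 * v w ^ i := by
            exact mul_le_mul_of_nonneg_right (ha i h1 hi) (by positivity)
      _ = v w ^ i := one_mul _
      _ < v w ^ d := pow_lt_pow_right₀ hw1 hi
  -- Lemma C: if v z < r then v (f z) = c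
  have lemC : ∀ z : L, v z < r → v (f z) = c := by
    intro z hz
    have key : v (z ^ d + ∑ i ∈ Finset.range (d - 1), a (i + 1) * z ^ (i + 1)) < c := by
      have hm1 : (1 : ℝ) ≤ max 1 (v z) := le_max_left _ _
      have hmlt : max 1 (v z) ^ (d - 1) < c := by
        rcases le_or_gt (v z) 1 with h | h
        · rw [max_eq_left h, one_pow]; exact ha0
        · rw [max_eq_right h.le]
          calc v z ^ (d - 1) < r ^ (d - 1) := pow_lt_pow_left₀ hz (v.nonneg z) (by omega)
          _ < r ^ d := pow_lt_pow_right₀ hr1 (by omega)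
          _ = c := hrd
      refine lt_of_le_of_lt (hna _ _) (max_lt ?_ ?_)
      · rw [v.map_pow]
        calc v z ^ d < r ^ d := pow_lt_pow_left₀ hz (v.nonneg z) hd0.ne'
        _ = c := hrd
      · refine na_sum_lt v hna _ _ hc0 ?_
        intro i hi
        rw [Finset.mem_range] at hi
        rw [v.map_mul, v.map_pow]
        calc v (a (i + 1)) * v z ^ (i + 1) ≤ 1 * (max 1 (v z)) ^ (i + 1) := by
              refine mul_le_mul (ha _ (by omega) (by omega)) ?_ (by positivity) zero_le_one
              exact pow_le_pow_left₀ (v.nonneg z) (le_max_right _ _) _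
        _ = max 1 (v z) ^ (i + 1) := one_mul _
        _ ≤ max 1 (v z) ^ (d - 1) := pow_le_pow_right₀ hm1 (by omega)
        _ < c := hmlt
    have hsplit : f z = (z ^ d + ∑ i ∈ Finset.range (d - 1), a (i + 1) * z ^ (i + 1)) + a 0 := by
      rw [hf z]
      have : d = (d - 1) + 1 := by omega
      rw [this, Finset.sum_range_succ']
      ring_nf
      simp [add_assoc, add_comm]
    rw [hsplit, add_comm, na_add_eq v hna key]
  -- step lemma: if c ≤ v w then v (f w) = v w ^ d
  have step : ∀ w : L, c ≤ v w → v (f w) = v w ^ d :=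
    fun w hw => lemB w (lt_of_lt_of_le hrc hw)
  -- main escape statement
  have main : ∀ z : L, v z ≠ r → Tendsto (fun n => v (f^[n] z)) atTop atTop := by
    intro z hz
    have h1 : c ≤ v (f z) := by
      rcases lt_trichotomy (v z) r with h | h | h
      · exact (lemC z h).ge
      · exact absurd h hz
      · rw [lemB z h, ← hrd]
        exact pow_le_pow_left₀ hr0.le h.le d
    have key : ∀ n : ℕ, 1 ≤ n → c ^ n ≤ v (f^[n] z) := by
      intro n hn
      induction n with
      | zero => omega
      | succ n ih =>
          rcases Nat.eq_zero_or_pos n with h0 | h0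
          · subst h0; simpa using h1
          · have hih := ih h0
            have hcn : c ≤ c ^ n := le_self_pow₀ ha0.le h0.ne'
            have hrn : r < v (f^[n] z) := lt_of_lt_of_le hrc (le_trans hcn hih)
            rw [Function.iterate_succ_apply', lemB _ hrn]
            calc c ^ (n + 1) ≤ c ^ (n * d) := pow_le_pow_right₀ ha0.le (by nlinarith)
            _ = (c ^ n) ^ d := pow_mul c n d
            _ ≤ v (f^[n] z) ^ d := pow_le_pow_left₀ (by positivity) hih d
    refine tendsto_atTop_mono' atTop ?_ (tendsto_pow_atTop_atTop_of_one_lt ha0)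
    filter_upwards [eventually_ge_atTop 1] with n hn using key n hn
  refine ⟨?_, main⟩
  intro z ⟨C, hC⟩
  by_contra h
  obtain ⟨n, hn⟩ := ((main z h).eventually (eventually_gt_atTop C)).exists
  exact absurd (hC n) (not_le.mpr hn)
end

section
/- For every ε > 0 there exists X₀ such that for all X ≥ X₀, the sum over integers 1 ≤ n ≤ X of 1/rad(n) is at most X^ε, where rad(n) is the product of the distinct primes dividing n. -/
/-- The radical of a positive integer: the product of its distinct prime divisors. -/
def rad (n : ℕ) : ℕ := ∏ p ∈ n.primeFactors, p

lemma rad_pos (n : ℕ) : 0 < rad n :=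
  Finset.prod_pos fun _ hp => (Nat.prime_of_mem_primeFactors hp).pos

lemma rad_one : rad 1 = 1 := by simp [rad]

lemma rad_mul_coprime {m n : ℕ} (hm : m ≠ 0) (hn : n ≠ 0) (h : Nat.Coprime m n) :
    rad (m * n) = rad m * rad n := by
  unfold rad
  rw [Nat.primeFactors_mul hm hn, Finset.prod_union (Nat.Coprime.disjoint_primeFactors h)]

lemma rad_prime_pow {p : ℕ} (hp : p.Prime) (k : ℕ) : rad (p ^ (k + 1)) = p := by
  unfold rad
  rw [Nat.primeFactors_prime_pow (k := k + 1) (p := p) (Nat.succ_ne_zero k) hp]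
  simp

/-- for every `ε > 0`, eventually `∑_{1 ≤ n ≤ X} 1/rad(n) ≤ X^ε`. -/
theorem stmt7 (ε : ℝ) (hε : 0 < ε) :
    ∃ X₀ : ℝ, ∀ X : ℝ, X₀ ≤ X →
      ∑ n ∈ Finset.Icc 1 ⌊X⌋₊, (1 : ℝ) / (rad n : ℝ) ≤ X ^ ε := by
  set δ : ℝ := ε / 2 with hδdef
  have hδ : 0 < δ := by positivity
  set c : ℝ := 1 - (2 : ℝ) ^ (-δ) with hcdef
  have h2δ : (2 : ℝ) ^ (-δ) < 1 :=
    Real.rpow_lt_one_of_one_lt_of_neg one_lt_two (by linarith)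
  have hc : 0 < c := by rw [hcdef]; linarith
  -- the multiplicative weight
  set f : ℕ → ℝ := fun n => (n : ℝ) ^ (-δ) * ((rad n : ℝ))⁻¹ with hfdef
  have hfnonneg : ∀ n, 0 ≤ f n := fun n => by
    have := rad_pos n
    positivity
  have hf1 : f 1 = 1 := by simp [hfdef, rad_one]
  have hf0 : f 0 = 0 := by
    simp [hfdef, Real.zero_rpow (by linarith : -δ ≠ 0)]
  have hmul : ∀ {m n : ℕ}, Nat.Coprime m n → f (m * n) = f m * f n := by
    intro m n h
    rcases eq_or_ne m 0 with rfl | hm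
    · have hn1 : n = 1 := by simpa [Nat.coprime_zero_left] using h
      subst hn1; simp [hf0, hf1]
    rcases eq_or_ne n 0 with rfl | hn
    · have hm1 : m = 1 := by simpa [Nat.coprime_zero_right] using h
      subst hm1; simp [hf0, hf1]
    · simp only [hfdef, Nat.cast_mul, rad_mul_coprime hm hn h,
        Real.mul_rpow (Nat.cast_nonneg m) (Nat.cast_nonneg n), mul_inv]
      ring
  -- value of f on prime powers
  have hfpk : ∀ {p : ℕ}, p.Prime → ∀ k : ℕ,
      f (p ^ (k + 1)) = ((p : ℝ) ^ (-δ)) ^ (k + 1) * ((p : ℝ))⁻¹ := by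
    intro p hp k
    have hp0 : (0 : ℝ) ≤ p := Nat.cast_nonneg p
    simp only [hfdef, rad_prime_pow hp, Nat.cast_pow]
    rw [← Real.rpow_natCast ((p : ℝ)) (k + 1), ← Real.rpow_mul hp0,
      ← Real.rpow_natCast ((p : ℝ) ^ (-δ)) (k + 1), ← Real.rpow_mul hp0]
    ring_nf
  have hgeo : ∀ {p : ℕ}, p.Prime → (p : ℝ) ^ (-δ) < 1 := fun {p} hp =>
    Real.rpow_lt_one_of_one_lt_of_neg (by exact_mod_cast hp.one_lt) (by linarith)
  have hrnonneg : ∀ p : ℕ, 0 ≤ (p : ℝ) ^ (-δ) := fun p => Real.rpow_nonneg (Nat.cast_nonneg p) _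
  have hsump : ∀ {p : ℕ}, p.Prime → Summable (fun k : ℕ => ‖f (p ^ k)‖) := by
    intro p hp
    refine Summable.of_nonneg_of_le (fun _ => norm_nonneg _) (fun k => ?_)
      (summable_geometric_of_lt_one (hrnonneg p) (hgeo hp))
    rw [Real.norm_of_nonneg (hfnonneg _)]
    cases k with
    | zero => simp [hf1]
    | succ k =>
      rw [hfpk hp k]
      have h1 : ((p : ℝ))⁻¹ ≤ 1 := by
        rw [inv_le_one_iff₀]; right; exact_mod_cast hp.one_le
      calc ((p : ℝ) ^ (-δ)) ^ (k + 1) * ((p : ℝ))⁻¹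
          ≤ ((p : ℝ) ^ (-δ)) ^ (k + 1) * 1 := by
            apply mul_le_mul_of_nonneg_left h1 (by positivity)
        _ = ((p : ℝ) ^ (-δ)) ^ (k + 1) := mul_one _
  -- each Euler factor is at most exp (c⁻¹ p^{-(1+δ)})
  have hfactor : ∀ {p : ℕ}, p.Prime →
      (∑' k : ℕ, f (p ^ k)) ≤ Real.exp (c⁻¹ * (p : ℝ) ^ (-(1 + δ))) := by
    intro p hp
    have hp0 : (0 : ℝ) < p := by exact_mod_cast hp.pos
    have hsum : Summable (fun k : ℕ => f (p ^ k)) := (hsump hp).of_norm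
    set r : ℝ := (p : ℝ) ^ (-δ) with hrdef
    have hr0 : 0 ≤ r := hrnonneg p
    have hr1 : r < 1 := hgeo hp
    have heq : ∀ k : ℕ, f (p ^ (k + 1)) = (r * ((p : ℝ))⁻¹) * r ^ k := by
      intro k; rw [hfpk hp k, pow_succ]; ring
    have htail : (∑' k : ℕ, f (p ^ (k + 1))) = (r * ((p : ℝ))⁻¹) * (1 - r)⁻¹ := by
      simp_rw [heq]
      rw [tsum_mul_left, tsum_geometric_of_lt_one hr0 hr1]
    have hzero : (∑' k : ℕ, f (p ^ k)) = 1 + (r * ((p : ℝ))⁻¹) * (1 - r)⁻¹ := by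
      rw [Summable.tsum_eq_zero_add hsum, pow_zero, hf1, ← htail]
    rw [hzero]
    -- bound the tail term by c⁻¹ p^{-(1+δ)}
    have hr2 : r ≤ (2 : ℝ) ^ (-δ) := by
      rw [hrdef, Real.rpow_neg hp0.le, Real.rpow_neg (by norm_num : (0:ℝ) ≤ 2)]
      apply inv_anti₀ (Real.rpow_pos_of_pos two_pos δ)
      exact Real.rpow_le_rpow (by norm_num) (by exact_mod_cast hp.two_le) hδ.le
    have hcr : c ≤ 1 - r := by rw [hcdef]; linarith
    have h1r : (0:ℝ) < 1 - r := by linarith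
    have hinv : (1 - r)⁻¹ ≤ c⁻¹ := inv_anti₀ hc hcr
    have hpe : (p : ℝ) ^ (-(1 + δ)) = r * ((p : ℝ))⁻¹ := by
      rw [hrdef, show -(1 + δ) = -δ + (-1) by ring, Real.rpow_add hp0, Real.rpow_neg_one]
    have hbound : (r * ((p : ℝ))⁻¹) * (1 - r)⁻¹ ≤ c⁻¹ * (p : ℝ) ^ (-(1 + δ)) := by
      rw [hpe, mul_comm (c⁻¹)]
      exact mul_le_mul_of_nonneg_left hinv (by positivity)
    calc 1 + (r * ((p : ℝ))⁻¹) * (1 - r)⁻¹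
        ≤ 1 + c⁻¹ * (p : ℝ) ^ (-(1 + δ)) := by linarith
      _ ≤ Real.exp (c⁻¹ * (p : ℝ) ^ (-(1 + δ))) := by
          rw [add_comm]; exact Real.add_one_le_exp _
  -- the constant
  have hTsummable : Summable (fun n : ℕ => (n : ℝ) ^ (-(1 + δ))) :=
    Real.summable_nat_rpow.mpr (by linarith)
  set T : ℝ := ∑' n : ℕ, (n : ℝ) ^ (-(1 + δ)) with hTdef
  set C : ℝ := Real.exp (c⁻¹ * T) with hCdef
  have hC1 : 1 ≤ C := Real.one_le_exp (by
    have : 0 ≤ T := tsum_nonneg fun n => Real.rpow_nonneg (Nat.cast_nonneg n) _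
    positivity)
  refine ⟨max 1 (C ^ (2 / ε)), fun X hX => ?_⟩
  have hX1 : (1 : ℝ) ≤ X := le_trans (le_max_left _ _) hX
  have hX0 : (0 : ℝ) < X := by linarith
  set N : ℕ := ⌊X⌋₊ with hNdef
  -- Euler product over smooth numbers
  obtain ⟨hsm, hhs⟩ :=
    EulerProduct.summable_and_hasSum_smoothNumbers_prod_primesBelow_tsum hf1 hmul hsump (N + 1)
  set P : ℝ := ∏ p ∈ (N + 1).primesBelow, ∑' k : ℕ, f (p ^ k) with hPdef
  -- step: sum over Icc is at most P
  have hstep1 : ∑ n ∈ Finset.Icc 1 N, f n ≤ P := by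
    have hind : Summable (Set.indicator (Nat.smoothNumbers (N + 1)) f) :=
      summable_subtype_iff_indicator.mp hhs.summable
    have heqP : P = ∑' n : ℕ, Set.indicator (Nat.smoothNumbers (N + 1)) f n := by
      rw [← hhs.tsum_eq, tsum_subtype]
    have hmem : ∀ n ∈ Finset.Icc 1 N, n ∈ Nat.smoothNumbers (N + 1) := by
      intro n hn
      rw [Finset.mem_Icc] at hn
      rw [Nat.mem_smoothNumbers]
      refine ⟨by omega, fun p hp => ?_⟩
      have := Nat.le_of_mem_primeFactorsList hp
      omega
    calc ∑ n ∈ Finset.Icc 1 N, f n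
        = ∑ n ∈ Finset.Icc 1 N, Set.indicator (Nat.smoothNumbers (N + 1)) f n :=
          Finset.sum_congr rfl fun n hn => (Set.indicator_of_mem (hmem n hn) f).symm
      _ ≤ ∑' n : ℕ, Set.indicator (Nat.smoothNumbers (N + 1)) f n :=
          Summable.sum_le_tsum _ (fun n _ => Set.indicator_nonneg (fun m _ => hfnonneg m) n) hind
      _ = P := heqP.symm
  -- step: P ≤ C
  have hstep2 : P ≤ C := by
    have hfac : ∀ p ∈ (N + 1).primesBelow,
        (∑' k : ℕ, f (p ^ k)) ≤ Real.exp (c⁻¹ * (p : ℝ) ^ (-(1 + δ))) := fun p hp =>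
      hfactor (Nat.prime_of_mem_primesBelow hp)
    calc P ≤ ∏ p ∈ (N + 1).primesBelow, Real.exp (c⁻¹ * (p : ℝ) ^ (-(1 + δ))) :=
          Finset.prod_le_prod (fun p _ => tsum_nonneg fun k => hfnonneg _) hfac
      _ = Real.exp (∑ p ∈ (N + 1).primesBelow, c⁻¹ * (p : ℝ) ^ (-(1 + δ))) :=
          (Real.exp_sum _ _).symm
      _ ≤ C := by
          rw [hCdef]
          apply Real.exp_le_exp.mpr
          rw [← Finset.mul_sum]
          apply mul_le_mul_of_nonneg_left _ (by positivity)
          exact Summable.sum_le_tsum _ (fun n _ => Real.rpow_nonneg (Nat.cast_nonneg n) _) hTsummable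
  -- step: the original sum is at most X^δ times the f-sum
  have hstep0 : ∑ n ∈ Finset.Icc 1 N, (1 : ℝ) / (rad n : ℝ)
      ≤ X ^ δ * ∑ n ∈ Finset.Icc 1 N, f n := by
    rw [Finset.mul_sum]
    apply Finset.sum_le_sum
    intro n hn
    rw [Finset.mem_Icc] at hn
    have hn0 : (0 : ℝ) < n := by exact_mod_cast hn.1
    have hnX : (n : ℝ) ≤ X := le_trans (by exact_mod_cast hn.2) (Nat.floor_le hX0.le)
    have hpow : (n : ℝ) ^ δ ≤ X ^ δ := Real.rpow_le_rpow hn0.le hnX hδ.le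
    have hnp : (0 : ℝ) < (n : ℝ) ^ δ := Real.rpow_pos_of_pos hn0 δ
    have hradpos : (0 : ℝ) < (rad n : ℝ) := by exact_mod_cast rad_pos n
    have key : (1 : ℝ) ≤ X ^ δ * ((n : ℝ) ^ δ)⁻¹ := by
      rw [← div_eq_mul_inv]
      exact (one_le_div hnp).mpr hpow
    have hfval : f n = ((n : ℝ) ^ δ)⁻¹ * ((rad n : ℝ))⁻¹ := by
      rw [hfdef]
      simp only [Real.rpow_neg hn0.le]
    rw [hfval, one_div, ← mul_assoc]
    calc ((rad n : ℝ))⁻¹ = 1 * ((rad n : ℝ))⁻¹ := (one_mul _).symm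
      _ ≤ (X ^ δ * ((n : ℝ) ^ δ)⁻¹) * ((rad n : ℝ))⁻¹ :=
          mul_le_mul_of_nonneg_right key (by positivity)
  -- conclude
  have hCX : C ≤ X ^ δ := by
    have hXC : C ^ (2 / ε) ≤ X := le_trans (le_max_right _ _) hX
    have hC0 : (0 : ℝ) ≤ C := by linarith
    calc C = C ^ ((2 / ε) * δ) := by
          rw [show (2 / ε) * δ = 1 by rw [hδdef]; field_simp, Real.rpow_one]
      _ = (C ^ (2 / ε)) ^ δ := Real.rpow_mul hC0 _ _
      _ ≤ X ^ δ := Real.rpow_le_rpow (Real.rpow_nonneg hC0 _) hXC hδ.le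
  have hXδ : (0 : ℝ) ≤ X ^ δ := Real.rpow_nonneg hX0.le δ
  calc ∑ n ∈ Finset.Icc 1 ⌊X⌋₊, (1 : ℝ) / (rad n : ℝ)
      ≤ X ^ δ * ∑ n ∈ Finset.Icc 1 N, f n := hstep0
    _ ≤ X ^ δ * P := mul_le_mul_of_nonneg_left hstep1 hXδ
    _ ≤ X ^ δ * C := mul_le_mul_of_nonneg_left hstep2 hXδ
    _ ≤ X ^ δ * X ^ δ := mul_le_mul_of_nonneg_left hCX hXδ
    _ = X ^ ε := by
        rw [← Real.rpow_add hX0, hδdef]; ring_nf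
end

section
/- Fix ε > 0. If x₁ = α₁/β₁ and x₂ = α₂/β₂ are chosen independently and uniformly at random from the set of rationals α/β in lowest terms with |α| ≤ X and 1 ≤ β ≤ X, then the probability that gcd(β₁, β₂) ≥ X^{2ε} is O_ε(X^{−ε}). -/
set_option maxHeartbeats 1000000

open Finset in
private lemma aux_sum_inv_sq (m n : ℕ) (hm : 1 ≤ m) :
    ∑ d ∈ Finset.Icc m n, ((d:ℝ)^2)⁻¹ ≤ 2 / m := by
  have hm' : (0:ℝ) < m := by exact_mod_cast hm
  rcases le_or_gt m n with h | h
  · rw [Finset.Icc_eq_cons_Ioc h, Finset.sum_cons]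
    have h1 : (∑ i ∈ Finset.Ioc m n, ((i:ℝ)^2)⁻¹) ≤ (m:ℝ)⁻¹ - (n:ℝ)⁻¹ :=
      sum_Ioc_inv_sq_le_sub (by omega) h
    have h2 : ((m:ℝ)^2)⁻¹ ≤ (m:ℝ)⁻¹ := by
      have h1m : (1:ℝ) ≤ m := by exact_mod_cast hm
      apply inv_anti₀ hm'
      nlinarith
    have h3 : (0:ℝ) ≤ (n:ℝ)⁻¹ := by positivity
    have : 2 / (m:ℝ) = (m:ℝ)⁻¹ + (m:ℝ)⁻¹ := by ring
    linarith
  · rw [Finset.Icc_eq_empty (by omega)]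
    simp only [Finset.sum_empty]
    positivity

/-- The finset of candidate (numerator, denominator) pairs with denominator
divisible by `d`. -/
private noncomputable def auxP (n d : ℕ) : Finset (ℤ × ℕ) :=
  (Finset.Icc (-(n:ℤ)) (n:ℤ)) ×ˢ ((Finset.Ioc 0 n).filter (d ∣ ·))

private def auxF : ℤ × ℕ → ℚ := fun p => (p.1 : ℚ) / (p.2 : ℚ)

private lemma auxP_card (n d : ℕ) : (auxP n d).card = (2 * n + 1) * (n / d) := by
  rw [auxP, Finset.card_product, Nat.Ioc_filter_dvd_card_eq_div, Int.card_Icc]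
  congr 1
  omega

private lemma auxP_mem {X : ℝ} {x : ℚ} (h1 : (|x.num| : ℝ) ≤ X)
    (h2 : (x.den : ℝ) ≤ X) {d : ℕ} (hd : d ∣ x.den) :
    (x.num, x.den) ∈ auxP ⌊X⌋₊ d := by
  simp only [auxP, Finset.mem_product, Finset.mem_Icc, Finset.mem_filter, Finset.mem_Ioc]
  have hnum : x.num.natAbs ≤ ⌊X⌋₊ := by
    apply Nat.le_floor
    rw [Nat.cast_natAbs]
    push_cast
    exact h1
  have hden : x.den ≤ ⌊X⌋₊ := Nat.le_floor h2
  exact ⟨⟨by omega, by omega⟩, ⟨x.pos, hden⟩, hd⟩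

private lemma auxF_num_den (x : ℚ) : auxF (x.num, x.den) = x := by
  simpa [auxF] using x.num_div_den

private lemma aux_sum_inv_sq2 (n : ℕ) :
    ∑ d ∈ Finset.Icc 2 n, ((d:ℝ)^2)⁻¹ ≤ 3 / 4 := by
  rcases le_or_gt 2 n with h | h
  · rw [Finset.Icc_eq_cons_Ioc h, Finset.sum_cons]
    have h1 : (∑ i ∈ Finset.Ioc 2 n, ((i:ℝ)^2)⁻¹) ≤ ((2:ℕ):ℝ)⁻¹ - (n:ℝ)⁻¹ :=
      sum_Ioc_inv_sq_le_sub (by omega) h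
    have h3 : (0:ℝ) ≤ (n:ℝ)⁻¹ := by positivity
    push_cast at h1 ⊢
    norm_num
    linarith
  · rw [Finset.Icc_eq_empty (by omega)]
    simp only [Finset.sum_empty]
    norm_num

private lemma aux_num_den {a b : ℕ} (hb : 1 ≤ b) (hcop : Nat.Coprime a b) :
    ((a:ℚ) / (b:ℚ)).num = (a:ℤ) ∧ ((a:ℚ) / (b:ℚ)).den = b := by
  have hb0 : (0:ℤ) < (b:ℤ) := by exact_mod_cast hb
  have hcop' : Nat.Coprime (a:ℤ).natAbs (b:ℤ).natAbs := by simpa using hcop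
  have hq : ((a:ℚ) / (b:ℚ)) = ((a:ℤ):ℚ) / ((b:ℤ):ℚ) := by push_cast; ring
  constructor
  · rw [hq]; exact Rat.num_div_eq_of_coprime hb0 hcop'
  · have : ((((a:ℤ):ℚ) / ((b:ℤ):ℚ)).den : ℤ) = (b:ℤ) := Rat.den_div_eq_of_coprime hb0 hcop'
    rw [hq]; exact_mod_cast this

/-- for two independent uniformly random rationals of height at most
`X`, the probability that the gcd of their denominators exceeds `X^{2ε}` is
`O_ε(X^{-ε})`, stated as a counting bound on pairs. -/
theorem stmt9 (ε : ℝ) (hε : 0 < ε) :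
    ∃ C > (0 : ℝ), ∀ X : ℝ, 1 ≤ X →
      (({p : ℚ × ℚ |
          ((|p.1.num| : ℝ) ≤ X ∧ (p.1.den : ℝ) ≤ X) ∧
          ((|p.2.num| : ℝ) ≤ X ∧ (p.2.den : ℝ) ≤ X) ∧
          X ^ (2 * ε) ≤ (Nat.gcd p.1.den p.2.den : ℝ)}).ncard : ℝ) ≤
        C * X ^ (-ε) *
          (({x : ℚ | (|x.num| : ℝ) ≤ X ∧ (x.den : ℝ) ≤ X}).ncard : ℝ) ^ 2 := by
  refine ⟨4608, by norm_num, fun X hX => ?_⟩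
  have hX0 : (0:ℝ) < X := by linarith
  set n := ⌊X⌋₊ with hn_def
  have hn1 : 1 ≤ n := Nat.le_floor (by exact_mod_cast hX)
  have hnX : (n:ℝ) ≤ X := Nat.floor_le hX0.le
  have hXn : X ≤ 2 * n := by
    have h1 := Nat.lt_floor_add_one X
    have h2 : (1:ℝ) ≤ (n:ℝ) := by exact_mod_cast hn1
    rw [← hn_def] at h1
    linarith
  set m := ⌈X ^ (2 * ε)⌉₊ with hm_def
  have hrp : (0:ℝ) < X ^ (2 * ε) := Real.rpow_pos_of_pos hX0 _
  have hrp1 : (1:ℝ) ≤ X ^ (2 * ε) := Real.one_le_rpow hX (by positivity)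
  have hm1 : 1 ≤ m := Nat.one_le_ceil_iff.2 hrp
  have hmX : X ^ (2 * ε) ≤ m := Nat.le_ceil _
  set S := {x : ℚ | (|x.num| : ℝ) ≤ X ∧ (x.den : ℝ) ≤ X} with hS_def
  set T := {p : ℚ × ℚ |
      ((|p.1.num| : ℝ) ≤ X ∧ (p.1.den : ℝ) ≤ X) ∧
      ((|p.2.num| : ℝ) ≤ X ∧ (p.2.den : ℝ) ≤ X) ∧
      X ^ (2 * ε) ≤ (Nat.gcd p.1.den p.2.den : ℝ)} with hT_def
  -- Upper bound for the pair count
  classical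
  set Q : Finset ((ℤ × ℕ) × (ℤ × ℕ)) :=
    (Finset.Icc m n).biUnion (fun d => (auxP n d) ×ˢ (auxP n d)) with hQ_def
  have hTsub : T ⊆ (fun q : (ℤ × ℕ) × (ℤ × ℕ) => (auxF q.1, auxF q.2)) '' ↑Q := by
    rintro ⟨x, y⟩ ⟨⟨hx1, hx2⟩, ⟨hy1, hy2⟩, hg⟩
    refine ⟨((x.num, x.den), (y.num, y.den)), ?_, by simp [auxF_num_den]⟩
    rw [Finset.mem_coe, hQ_def, Finset.mem_biUnion]
    refine ⟨Nat.gcd x.den y.den, Finset.mem_Icc.2 ⟨Nat.ceil_le.2 hg, ?_⟩,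
      Finset.mem_product.2 ⟨auxP_mem hx1 hx2 (Nat.gcd_dvd_left _ _),
        auxP_mem hy1 hy2 (Nat.gcd_dvd_right _ _)⟩⟩
    calc Nat.gcd x.den y.den ≤ x.den := Nat.gcd_le_left _ x.pos
      _ ≤ n := Nat.le_floor hx2
  have hT1 : T.ncard ≤ Q.card := by
    calc T.ncard ≤ ((fun q : (ℤ × ℕ) × (ℤ × ℕ) => (auxF q.1, auxF q.2)) '' ↑Q).ncard :=
          Set.ncard_le_ncard hTsub ((Q : Set ((ℤ × ℕ) × ℤ × ℕ)).toFinite.image (fun q => (auxF q.1, auxF q.2)))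
      _ ≤ (↑Q : Set ((ℤ × ℕ) × ℤ × ℕ)).ncard :=
          Set.ncard_image_le (Q : Set ((ℤ × ℕ) × ℤ × ℕ)).toFinite
      _ = Q.card := Set.ncard_coe_finset Q
  have hQcard : Q.card ≤ ∑ d ∈ Finset.Icc m n, ((2 * n + 1) * (n / d))^2 := by
    refine Finset.card_biUnion_le.trans (Finset.sum_le_sum fun d _ => ?_)
    rw [Finset.card_product, auxP_card, sq]
  have hQreal : (Q.card : ℝ) ≤ 9 * X^4 * (2 / m) := by
    have step : ∀ d ∈ Finset.Icc m n, ((((2 * n + 1) * (n / d))^2 : ℕ) : ℝ)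
        ≤ 9 * X^4 * ((d:ℝ)^2)⁻¹ := by
      intro d hd
      have hd1 : 1 ≤ d := le_trans hm1 (Finset.mem_Icc.1 hd).1
      have hd0 : (0:ℝ) < d := by exact_mod_cast hd1
      push_cast
      have e1 : 2*(n:ℝ)+1 ≤ 3*X := by linarith
      have e2 : ((n / d : ℕ) : ℝ) ≤ X / d := le_trans Nat.cast_div_le (by gcongr)
      have e0 : (0:ℝ) ≤ ((n/d:ℕ):ℝ) := by positivity
      have key : (2*(n:ℝ)+1) * ((n/d:ℕ):ℝ) ≤ (3*X)*(X/d) :=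
        mul_le_mul e1 e2 e0 (by positivity)
      calc ((2*(n:ℝ)+1) * ((n/d:ℕ):ℝ))^2 ≤ ((3*X)*(X/d))^2 :=
            pow_le_pow_left₀ (by positivity) key 2
        _ = 9*X^4*((d:ℝ)^2)⁻¹ := by field_simp; ring
    calc (Q.card : ℝ) ≤ ((∑ d ∈ Finset.Icc m n, ((2 * n + 1) * (n / d))^2 : ℕ) : ℝ) := by
          exact_mod_cast hQcard
      _ = ∑ d ∈ Finset.Icc m n, ((((2 * n + 1) * (n / d))^2 : ℕ) : ℝ) := by push_cast; rfl
      _ ≤ ∑ d ∈ Finset.Icc m n, 9 * X^4 * ((d:ℝ)^2)⁻¹ := Finset.sum_le_sum step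
      _ = 9 * X^4 * ∑ d ∈ Finset.Icc m n, ((d:ℝ)^2)⁻¹ := by rw [Finset.mul_sum]
      _ ≤ 9 * X^4 * (2 / m) := by
          apply mul_le_mul_of_nonneg_left (aux_sum_inv_sq m n hm1) (by positivity)
  have hTfinal : (T.ncard : ℝ) ≤ 18 * X ^ (-ε) * X^4 := by
    have h1 : (T.ncard : ℝ) ≤ 9 * X^4 * (2 / m) := le_trans (by exact_mod_cast hT1) hQreal
    have h2 : 2 / (m:ℝ) ≤ 2 / X ^ (2 * ε) := by
      apply div_le_div_of_nonneg_left (by norm_num) hrp hmX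
    have h3 : 2 / X ^ (2 * ε) = 2 * X ^ (-(2*ε)) := by
      rw [Real.rpow_neg hX0.le, div_eq_mul_inv]
    have h4 : X ^ (-(2*ε)) = X ^ (-ε) * X ^ (-ε) := by
      rw [← Real.rpow_add hX0]; ring_nf
    have h5 : X ^ (-ε) ≤ 1 := Real.rpow_le_one_of_one_le_of_nonpos hX (by linarith)
    have h6 : (0:ℝ) ≤ X ^ (-ε) := le_of_lt (Real.rpow_pos_of_pos hX0 _)
    calc (T.ncard : ℝ) ≤ 9 * X^4 * (2 / m) := h1
      _ ≤ 9 * X^4 * (2 * (X ^ (-ε) * X ^ (-ε))) := by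
          rw [← h4, ← h3]; exact mul_le_mul_of_nonneg_left h2 (by positivity)
      _ ≤ 9 * X^4 * (2 * (X ^ (-ε) * 1)) := by
          apply mul_le_mul_of_nonneg_left _ (by positivity)
          apply mul_le_mul_of_nonneg_left _ (by norm_num)
          exact mul_le_mul_of_nonneg_left h5 h6
      _ = 18 * X ^ (-ε) * X^4 := by ring
  -- Lower bound for the single count
  set F' : Finset (ℕ × ℕ) :=
    ((Finset.Icc 1 n) ×ˢ (Finset.Icc 1 n)).filter (fun p => Nat.Coprime p.1 p.2) with hF'_def
  have hF'mem : ∀ p ∈ F', (1 ≤ p.1 ∧ p.1 ≤ n) ∧ (1 ≤ p.2 ∧ p.2 ≤ n) ∧ Nat.Coprime p.1 p.2 := by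
    intro p hp
    simp only [hF'_def, Finset.mem_filter, Finset.mem_product, Finset.mem_Icc] at hp
    tauto
  have hmapS : ∀ p ∈ (↑F' : Set (ℕ × ℕ)), ((p.1 : ℚ) / (p.2 : ℚ)) ∈ S := by
    rintro ⟨a, b⟩ hp
    obtain ⟨⟨ha1, ha2⟩, ⟨hb1, hb2⟩, hcop⟩ := hF'mem _ (Finset.mem_coe.1 hp)
    obtain ⟨hnum, hden⟩ := aux_num_den hb1 hcop
    simp only [hS_def, Set.mem_setOf_eq]
    constructor
    · rw [hnum]
      push_cast
      rw [abs_of_nonneg (by positivity)]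
      have : (a:ℝ) ≤ (n:ℝ) := by exact_mod_cast ha2
      linarith
    · rw [hden]
      have : (b:ℝ) ≤ (n:ℝ) := by exact_mod_cast hb2
      linarith
  have hinj : Set.InjOn (fun p : ℕ × ℕ => (p.1 : ℚ) / (p.2 : ℚ)) ↑F' := by
    rintro ⟨a, b⟩ ha ⟨c, d⟩ hc h
    obtain ⟨⟨_, _⟩, ⟨hb1, _⟩, hcop1⟩ := hF'mem _ (Finset.mem_coe.1 ha)
    obtain ⟨⟨_, _⟩, ⟨hd1, _⟩, hcop2⟩ := hF'mem _ (Finset.mem_coe.1 hc)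
    obtain ⟨hnum1, hden1⟩ := aux_num_den (a := a) (b := b) hb1 hcop1
    obtain ⟨hnum2, hden2⟩ := aux_num_den (a := c) (b := d) hd1 hcop2
    simp only at h
    have e1 : (a:ℤ) = (c:ℤ) := by rw [← hnum1, ← hnum2, h]
    have e2 : b = d := by rw [← hden1, ← hden2, h]
    have : a = c := by exact_mod_cast e1
    simp [this, e2]
  have hSfin : S.Finite := by
    apply Set.Finite.subset ((↑(auxP n 1) : Set (ℤ × ℕ)).toFinite.image auxF)
    rintro x ⟨h1, h2⟩
    exact ⟨(x.num, x.den), auxP_mem h1 h2 (one_dvd _), auxF_num_den x⟩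
  have hSlow : (F'.card : ℝ) ≤ S.ncard := by
    have := Set.ncard_le_ncard_of_injOn _ hmapS hinj hSfin
    rw [Set.ncard_coe_finset] at this
    exact_mod_cast this
  have hF'card : ((n:ℝ)^2) / 4 ≤ F'.card := by
    set F : Finset (ℕ × ℕ) := (Finset.Icc 1 n) ×ˢ (Finset.Icc 1 n) with hF_def
    set Bad : Finset (ℕ × ℕ) := F.filter (fun p => ¬ Nat.Coprime p.1 p.2) with hBad_def
    have hFcard : F.card = n * n := by
      rw [hF_def, Finset.card_product, Nat.card_Icc]
      simp
    have hsplit : F'.card + Bad.card = F.card :=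
      Finset.card_filter_add_card_filter_not _
    have hBadsub : Bad ⊆ (Finset.Icc 2 n).biUnion
        (fun d => F.filter (fun p => d ∣ p.1 ∧ d ∣ p.2)) := by
      rintro ⟨a, b⟩ hp
      simp only [hBad_def, Finset.mem_filter, hF_def, Finset.mem_product,
        Finset.mem_Icc] at hp
      obtain ⟨⟨⟨ha1, ha2⟩, hb1, hb2⟩, hncop⟩ := hp
      rw [Finset.mem_biUnion]
      refine ⟨Nat.gcd a b, Finset.mem_Icc.2 ⟨?_, ?_⟩, ?_⟩
      · have h1 : Nat.gcd a b ≠ 1 := hncop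
        have h0 : 0 < Nat.gcd a b := Nat.gcd_pos_of_pos_left b (by omega)
        omega
      · exact le_trans (Nat.gcd_le_left _ (by omega)) ha2
      · simp only [Finset.mem_filter, hF_def, Finset.mem_product, Finset.mem_Icc]
        exact ⟨⟨⟨ha1, ha2⟩, hb1, hb2⟩, Nat.gcd_dvd_left _ _, Nat.gcd_dvd_right _ _⟩
    have hfiltercard : ∀ d : ℕ, (F.filter (fun p => d ∣ p.1 ∧ d ∣ p.2)).card
        = (n / d) * (n / d) := by
      intro d
      have hIcc : ((Finset.Icc 1 n).filter (d ∣ ·)).card = n / d := by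
        have hIoc : Finset.Icc 1 n = Finset.Ioc 0 n := by
          ext x
          simp only [Finset.mem_Icc, Finset.mem_Ioc]
          omega
        rw [hIoc, ← Nat.Ioc_filter_dvd_card_eq_div n d]
      rw [hF_def, Finset.filter_product, Finset.card_product, hIcc]
    have hBadcard : (Bad.card : ℝ) ≤ (3 / 4) * (n:ℝ)^2 := by
      have h1 : Bad.card ≤ ∑ d ∈ Finset.Icc 2 n, (n / d) * (n / d) := by
        refine le_trans (Finset.card_le_card hBadsub) ?_
        refine Finset.card_biUnion_le.trans (Finset.sum_le_sum fun d _ => ?_)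
        rw [hfiltercard]
      have h2 : ∀ d ∈ Finset.Icc 2 n, (((n / d) * (n / d) : ℕ) : ℝ)
          ≤ (n:ℝ)^2 * ((d:ℝ)^2)⁻¹ := by
        intro d hd
        have hd2 : 2 ≤ d := (Finset.mem_Icc.1 hd).1
        have hd0 : (0:ℝ) < d := by exact_mod_cast (by omega : 0 < d)
        have e2 : ((n / d : ℕ) : ℝ) ≤ (n:ℝ) / d := Nat.cast_div_le
        have e0 : (0:ℝ) ≤ ((n/d:ℕ):ℝ) := by positivity
        push_cast
        calc ((n/d:ℕ):ℝ) * ((n/d:ℕ):ℝ) ≤ ((n:ℝ)/d) * ((n:ℝ)/d) :=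
              mul_le_mul e2 e2 e0 (by positivity)
          _ = (n:ℝ)^2 * ((d:ℝ)^2)⁻¹ := by field_simp
      calc (Bad.card : ℝ) ≤ ((∑ d ∈ Finset.Icc 2 n, (n / d) * (n / d) : ℕ) : ℝ) := by
            exact_mod_cast h1
        _ = ∑ d ∈ Finset.Icc 2 n, (((n / d) * (n / d) : ℕ) : ℝ) := by push_cast; rfl
        _ ≤ ∑ d ∈ Finset.Icc 2 n, (n:ℝ)^2 * ((d:ℝ)^2)⁻¹ := Finset.sum_le_sum h2
        _ = (n:ℝ)^2 * ∑ d ∈ Finset.Icc 2 n, ((d:ℝ)^2)⁻¹ := by rw [Finset.mul_sum]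
        _ ≤ (n:ℝ)^2 * (3/4) := by
            exact mul_le_mul_of_nonneg_left (aux_sum_inv_sq2 n) (by positivity)
        _ = (3/4) * (n:ℝ)^2 := by ring
    have htot : (F'.card : ℝ) + (Bad.card : ℝ) = (n:ℝ) * (n:ℝ) := by
      exact_mod_cast congrArg (fun k : ℕ => (k:ℝ)) (hsplit.trans hFcard)
    nlinarith [hBadcard, htot]
  -- combine
  have hScard : X^2 / 16 ≤ (S.ncard : ℝ) := by
    have : X^2 / 16 ≤ ((n:ℝ)^2) / 4 := by nlinarith
    linarith
  have hS0 : (0:ℝ) ≤ (S.ncard:ℝ) := by positivity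
  have hfinal : X^4 ≤ 256 * (S.ncard : ℝ)^2 := by nlinarith
  have h6 : (0:ℝ) ≤ X ^ (-ε) := le_of_lt (Real.rpow_pos_of_pos hX0 _)
  calc (T.ncard : ℝ) ≤ 18 * X ^ (-ε) * X^4 := hTfinal
    _ ≤ 18 * X ^ (-ε) * (256 * (S.ncard : ℝ)^2) := by
        exact mul_le_mul_of_nonneg_left hfinal (by positivity)
    _ = 4608 * X ^ (-ε) * (S.ncard : ℝ)^2 := by ring
end

section
/- Let f be a monic complex polynomial of degree d ≥ 2 whose escape-rate function G_f satisfies: G_f is continuous, nonnegative, harmonic off the filled Julia set, G_f(z) − log|z| → 0 as |z| → ∞, and G_f(z) ≤ d·M·dist(z, K_f)^α for constants M, A = (3d/2)(R+1)^{d-1}, α = log d / log A as in the text. Then G_f is uniformly Hölder continuous: |G_f(z₁) − G_f(z₂)| ≤ 3dM|z₁ − z₂|^α for all z₁, z₂ ∈ ℂ. -/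
open Filter Metric Set

lemma aux_deriv_eq_of_re_eq {g₁ g₂ : ℂ → ℂ} {w : ℂ}
    (h₁ : DifferentiableAt ℂ g₁ w) (h₂ : DifferentiableAt ℂ g₂ w)
    (hre : ∀ᶠ z in nhds w, (g₁ z).re = (g₂ z).re) :
    deriv g₁ w = deriv g₂ w := by
  have hg : HasDerivAt (fun z => g₁ z - g₂ z) (deriv g₁ w - deriv g₂ w) w :=
    (h₁.hasDerivAt.sub h₂.hasDerivAt)
  set c : ℂ := deriv g₁ w - deriv g₂ w with hc
  have hF : HasFDerivAt (fun z => g₁ z - g₂ z)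
      (((1 : ℂ →L[ℂ] ℂ).smulRight c).restrictScalars ℝ) w :=
    (hg.hasFDerivAt).restrictScalars ℝ
  have hRe : HasFDerivAt (fun z => ((g₁ z - g₂ z).re : ℝ))
      (Complex.reCLM.comp (((1 : ℂ →L[ℂ] ℂ).smulRight c).restrictScalars ℝ)) w :=
    (Complex.reCLM.hasFDerivAt).comp w hF
  have hre' : (fun z => ((g₁ z - g₂ z).re : ℝ)) =ᶠ[nhds w] (fun _ => (0 : ℝ)) := by
    filter_upwards [hre] with z hz
    simp [Complex.sub_re, hz]
  have h0 : HasFDerivAt (fun _ : ℂ => (0 : ℝ)) (0 : ℂ →L[ℝ] ℝ) w := hasFDerivAt_const _ _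
  have h0' : HasFDerivAt (fun z => ((g₁ z - g₂ z).re : ℝ)) (0 : ℂ →L[ℝ] ℝ) w :=
    h0.congr_of_eventuallyEq hre'
  have hD : Complex.reCLM.comp (((1 : ℂ →L[ℂ] ℂ).smulRight c).restrictScalars ℝ)
      = (0 : ℂ →L[ℝ] ℝ) := hRe.unique h0'
  have h1 : c.re = 0 := by
    have := congrArg (fun L : ℂ →L[ℝ] ℝ => L 1) hD
    simpa using this
  have h2 : c.im = 0 := by
    have := congrArg (fun L : ℂ →L[ℝ] ℝ => L Complex.I) hD
    simpa [Complex.mul_re] using this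
  have : c = 0 := Complex.ext h1 h2
  exact sub_eq_zero.mp this

set_option maxHeartbeats 1000000 in
lemma aux_harnack {G : ℂ → ℝ} {K : Set ℂ}
    (hGnonneg : ∀ z, 0 ≤ G z)
    (hharm : ∀ z ∉ K, ∃ r > (0 : ℝ), ∃ h : ℂ → ℂ,
      DifferentiableOn ℂ h (Metric.ball z r) ∧ ∀ w ∈ Metric.ball z r, G w = (h w).re)
    {x y : ℂ} {r₁ : ℝ} (hr₁ : 0 < r₁) (hdisj : ∀ w ∈ ball x r₁, w ∉ K)
    (hyball : ‖x - y‖ < 2 / 3 * r₁) :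
    G x - G y ≤ 2 * (‖x - y‖ / (2 / 3 * r₁)) * G x := by
  -- choose local holomorphic representatives
  have hloc : ∀ w : ℂ, ∃ r > (0:ℝ), ∃ h : ℂ → ℂ,
      (w ∈ ball x r₁ → DifferentiableOn ℂ h (ball w r) ∧ ∀ v ∈ ball w r, G v = (h v).re) := by
    intro w
    by_cases hw : w ∈ ball x r₁
    · obtain ⟨r, hr, h, hd, hre⟩ := hharm w (hdisj w hw)
      exact ⟨r, hr, h, fun _ => ⟨hd, hre⟩⟩
    · exact ⟨1, one_pos, 0, fun hw' => absurd hw' hw⟩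
  choose rad hrad hh hprop using hloc
  set F : ℂ → ℂ := fun w => deriv (hh w) w with hFdef
  -- F is locally the derivative of each local representative
  have hFloc : ∀ w ∈ ball x r₁, ∀ᶠ z in nhds w, F z = deriv (hh w) z := by
    intro w hw
    have hN : ball w (rad w) ∩ ball x r₁ ∈ nhds w :=
      (isOpen_ball.inter isOpen_ball).mem_nhds ⟨mem_ball_self (hrad w), hw⟩
    filter_upwards [hN] with z hz
    apply aux_deriv_eq_of_re_eq
    · exact (hprop z hz.2).1.differentiableAt (isOpen_ball.mem_nhds (mem_ball_self (hrad z)))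
    · exact (hprop w hw).1.differentiableAt (isOpen_ball.mem_nhds hz.1)
    · have hN2 : ball z (rad z) ∩ ball w (rad w) ∈ nhds z :=
        (isOpen_ball.inter isOpen_ball).mem_nhds ⟨mem_ball_self (hrad z), hz.1⟩
      filter_upwards [hN2] with v hv
      rw [← (hprop z hz.2).2 v hv.1, ← (hprop w hw).2 v hv.2]
  -- F is holomorphic on the ball
  have hFdiff : ∀ w ∈ ball x r₁, DifferentiableAt ℂ F w := by
    intro w hw
    have h1 : AnalyticOnNhd ℂ (hh w) (ball w (rad w)) :=
      (hprop w hw).1.analyticOnNhd isOpen_ball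
    have h2 : DifferentiableAt ℂ (deriv (hh w)) w :=
      h1.deriv.differentiableOn.differentiableAt
        (isOpen_ball.mem_nhds (mem_ball_self (hrad w)))
    exact h2.congr_of_eventuallyEq (hFloc w hw)
  -- power series of F on a slightly smaller closed ball
  set R5 : NNReal := (5/6*r₁).toNNReal with hR5def
  have hR5pos : 0 < R5 := Real.toNNReal_pos.mpr (by positivity)
  have hR5coe : (R5:ℝ) = 5/6*r₁ := Real.coe_toNNReal _ (by positivity)
  have hsub : closedBall x (R5:ℝ) ⊆ ball x r₁ := by
    rw [hR5coe]; exact closedBall_subset_ball (by linarith)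
  have hFd : DifferentiableOn ℂ F (closedBall x (R5:ℝ)) :=
    fun z hz => (hFdiff z (hsub hz)).differentiableWithinAt
  have hp : HasFPowerSeriesOnBall F (cauchyPowerSeries F x R5) x R5 :=
    hFd.hasFPowerSeriesOnBall hR5pos
  set p := cauchyPowerSeries F x R5 with hpdef
  set r' : ℝ := 3/4*r₁ with hr'def
  have hr'pos : 0 < r' := by positivity
  have hr'lt : ((r').toNNReal : ENNReal) < p.radius := by
    refine lt_of_lt_of_le ?_ hp.r_le
    rw [ENNReal.coe_lt_coe, hR5def]
    exact (Real.toNNReal_lt_toNNReal_iff (by positivity)).mpr (by rw [hr'def]; linarith)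
  -- summable bound for the antiderivative series
  have hu : Summable (fun n => ‖p.coeff n‖ * r' ^ n) := by
    have h1 := p.summable_norm_mul_pow hr'lt
    have h2 : ((r'.toNNReal : ℝ)) = r' := Real.coe_toNNReal _ hr'pos.le
    simpa [FormalMultilinearSeries.norm_apply_eq_norm_coef, h2] using h1
  set g : ℕ → ℂ → ℂ := fun n z => (p.coeff n / ((n:ℂ)+1)) * (z - x)^(n+1) with hgdef
  set g' : ℕ → ℂ → ℂ := fun n z => p.coeff n * (z - x)^n with hg'def
  have hgderiv : ∀ (n : ℕ) (z : ℂ), HasDerivAt (g n) (g' n z) z := by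
    intro n z
    have h1 : HasDerivAt (fun z : ℂ => (z - x)^(n+1)) (((n:ℂ)+1) * (z-x)^n) z := by
      have := ((hasDerivAt_pow (n+1) (z - x)).comp z ((hasDerivAt_id z).sub_const x))
      simpa [Function.comp_def] using this
    have h2 := h1.const_mul (p.coeff n / ((n:ℂ)+1))
    have hne : ((n:ℂ)+1) ≠ 0 := Nat.cast_add_one_ne_zero n
    refine h2.congr_deriv ?_
    rw [hg'def]
    field_simp
  have hgbound : ∀ (n : ℕ) (z : ℂ), z ∈ ball x r' → ‖g' n z‖ ≤ ‖p.coeff n‖ * r' ^ n := by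
    intro n z hz
    have hzx : ‖z - x‖ ≤ r' := by
      rw [mem_ball, dist_eq_norm] at hz; exact hz.le
    calc ‖g' n z‖ = ‖p.coeff n‖ * ‖z - x‖^n := by
          rw [hg'def]; simp [norm_mul, norm_pow]
      _ ≤ ‖p.coeff n‖ * r' ^ n := by gcongr
  have hg0 : Summable fun n => g n x := by
    have hz0 : (fun n => g n x) = fun _ => (0:ℂ) := by
      funext n; rw [hgdef]; simp
    rw [hz0]; exact summable_zero
  set H : ℂ → ℂ := fun z => ∑' n, g n z with hHdef
  have hHderiv : ∀ z ∈ ball x r', HasDerivAt H (F z) z := by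
    intro z hz
    have h1 : HasDerivAt H (∑' n, g' n z) z :=
      hasDerivAt_tsum_of_isPreconnected hu isOpen_ball (convex_ball x r').isPreconnected
        (fun n v _ => hgderiv n v) hgbound (mem_ball_self hr'pos) hg0 hz
    have hsum : (∑' n, g' n z) = F z := by
      have hmem : (z - x) ∈ Metric.eball (0 : ℂ) R5 := by
        rw [Metric.eball_coe]
        rw [mem_ball, dist_eq_norm, sub_zero]
        have h1' : ‖z - x‖ < r' := by rw [mem_ball, dist_eq_norm] at hz; exact hz
        rw [hR5coe]; rw [hr'def] at h1'; linarith
      have h2 := hp.sum hmem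
      have h3 : x + (z - x) = z := by ring
      rw [h3] at h2
      rw [h2]
      unfold FormalMultilinearSeries.sum
      apply tsum_congr
      intro n
      rw [FormalMultilinearSeries.apply_eq_pow_smul_coeff, smul_eq_mul, hg'def]
      ring
    rwa [hsum] at h1
  have hr'le : r' ≤ r₁ := by rw [hr'def]; linarith
  -- Re H - G is locally constant on ball x r'
  have hlocconst : ∀ w ∈ ball x r', ∀ᶠ v in nhds w, (H v).re - G v = (H w).re - G w := by
    intro w hw
    have hwU : w ∈ ball x r₁ := ball_subset_ball hr'le hw
    have hN : (ball x r' ∩ ball w (rad w)) ∩ {z | F z = deriv (hh w) z} ∈ nhds w := by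
      refine Filter.inter_mem (Filter.inter_mem ?_ ?_) (hFloc w hwU)
      · exact isOpen_ball.mem_nhds hw
      · exact isOpen_ball.mem_nhds (mem_ball_self (hrad w))
    obtain ⟨δ, hδpos, hδ⟩ := Metric.mem_nhds_iff.mp hN
    have hkey : ∀ v ∈ ball w δ, H v - hh w v = H w - hh w w := by
      have hder : ∀ u ∈ ball w δ, HasFDerivWithinAt (fun z => H z - hh w z)
          (0 : ℂ →L[ℝ] ℂ) (ball w δ) u := by
        intro u hu
        have hu1 := (hδ hu).1.1
        have hu2 := (hδ hu).1.2
        have hu3 : F u = deriv (hh w) u := (hδ hu).2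
        have h1 : HasDerivAt H (F u) u := hHderiv u hu1
        have h2 : HasDerivAt (hh w) (deriv (hh w) u) u :=
          ((hprop w hwU).1.differentiableAt (isOpen_ball.mem_nhds hu2)).hasDerivAt
        have h3 : HasDerivAt (fun z => H z - hh w z) (0:ℂ) u := by
          have := h1.sub h2
          rwa [hu3, sub_self] at this
        have h4 : HasFDerivAt (fun z => H z - hh w z) (0 : ℂ →L[ℂ] ℂ) u := by
          have h4' := h3.hasFDerivAt
          have he : (ContinuousLinearMap.toSpanSingleton ℂ (0:ℂ)) = (0 : ℂ →L[ℂ] ℂ) := by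
            ext v; simp
          rwa [he] at h4'
        have h5 : HasFDerivAt (fun z => H z - hh w z) (0 : ℂ →L[ℝ] ℂ) u := by
          have h5' := h4.restrictScalars ℝ
          have he : ((0 : ℂ →L[ℂ] ℂ).restrictScalars ℝ) = (0 : ℂ →L[ℝ] ℂ) := by
            ext v; simp
          rwa [he] at h5'
        exact h5.hasFDerivWithinAt
      intro v hv
      have := Convex.norm_image_sub_le_of_norm_hasFDerivWithin_le (C := 0) hder
        (fun u _ => by simp) (convex_ball w δ) (mem_ball_self hδpos) hv
      have h0 : ‖(H v - hh w v) - (H w - hh w w)‖ ≤ 0 := by simpa using this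
      have := norm_le_zero_iff.mp h0
      exact sub_eq_zero.mp this
    filter_upwards [ball_mem_nhds w hδpos] with v hv
    have hv1 : v ∈ ball w (rad w) := (hδ hv).1.2
    have hGv : G v = (hh w v).re := (hprop w hwU).2 v hv1
    have hGw : G w = (hh w w).re := (hprop w hwU).2 w (mem_ball_self (hrad w))
    have := congrArg Complex.re (hkey v hv)
    simp only [Complex.sub_re] at this
    rw [hGv, hGw]
    linarith
  -- hence globally constant on ball x r'
  have hconst : ∀ z ∈ ball x r', (H z).re - G z = (H x).re - G x := by
    intro z hz
    set γ : ℝ → ℂ := fun s => x + s • (z - x) with hγdef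
    have hγcont : Continuous γ := by
      exact continuous_const.add (continuous_id.smul continuous_const)
    have hγmem : ∀ s ∈ Icc (0:ℝ) 1, γ s ∈ ball x r' := by
      intro s hs
      rw [mem_ball, dist_eq_norm]
      have h1 : γ s - x = s • (z - x) := by rw [hγdef]; ring_nf
      rw [h1, norm_smul]
      have h2 : ‖z - x‖ < r' := by rw [mem_ball, dist_eq_norm] at hz; exact hz
      have h3 : ‖s‖ ≤ 1 := by
        rw [Real.norm_eq_abs, abs_le]; exact ⟨by linarith [hs.1], hs.2⟩
      calc ‖s‖ * ‖z - x‖ ≤ 1 * ‖z - x‖ := by gcongr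
        _ < r' := by linarith
    set ψ : ℝ → ℝ := fun s => (H (γ s)).re - G (γ s) with hψdef
    have hψder : ∀ s ∈ Icc (0:ℝ) 1, HasDerivWithinAt ψ 0 (Icc 0 1) s := by
      intro s hs
      have hev := hlocconst (γ s) (hγmem s hs)
      have hev2 : ∀ᶠ t in nhds s, ψ t = ψ s := (hγcont.continuousAt (x := s)).eventually hev
      exact ((hasDerivAt_const s (ψ s)).congr_of_eventuallyEq hev2).hasDerivWithinAt
    have hcv := Convex.norm_image_sub_le_of_norm_hasDerivWithin_le (C := 0) hψder
      (fun u _ => by simp) (convex_Icc 0 1) (left_mem_Icc.mpr zero_le_one)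
      (right_mem_Icc.mpr zero_le_one)
    have h0 : ‖ψ 1 - ψ 0‖ ≤ 0 := by simpa using hcv
    have h1 : ψ 1 = ψ 0 := by
      have := norm_le_zero_iff.mp h0; exact sub_eq_zero.mp this
    have hγ1 : γ 1 = z := by rw [hγdef]; simp
    have hγ0 : γ 0 = x := by rw [hγdef]; simp
    rw [hψdef] at h1
    simp only [hγ1, hγ0] at h1
    exact h1
  -- Cayley transform + Schwarz lemma, with an ε-shift to make Re positive
  set rs : ℝ := 2/3*r₁ with hrsdef
  have hrspos : 0 < rs := by positivity
  have hrs_lt : rs < r' := by rw [hrsdef, hr'def]; linarith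
  have hsub2 : ball x rs ⊆ ball x r' := ball_subset_ball hrs_lt.le
  set t : ℝ := ‖x - y‖ / rs with htdef
  have ht0 : 0 ≤ t := by positivity
  have ht1 : t < 1 := by
    rw [htdef, div_lt_one hrspos]; exact hyball
  have hyrs : y ∈ ball x rs := by
    rw [mem_ball, dist_eq_norm, norm_sub_rev]
    exact hyball
  have hystep : ∀ ε : ℝ, 0 < ε → G x - G y ≤ 2 * t * (G x + ε) := by
    intro ε hε
    set c₀ : ℂ := (((H x).re - G x : ℝ) : ℂ) with hc₀
    set hf : ℂ → ℂ := fun w => H w - c₀ + (ε:ℂ) with hfdef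
    have hfre : ∀ w ∈ ball x r', (hf w).re = G w + ε := by
      intro w hw
      rw [hfdef]
      simp only [Complex.add_re, Complex.sub_re, Complex.ofReal_re, hc₀]
      have := hconst w hw
      linarith
    have hfdiff : DifferentiableOn ℂ hf (ball x r') := by
      intro z hz
      exact (((hHderiv z hz).differentiableAt.sub_const c₀).add_const
        ((ε:ℂ))).differentiableWithinAt
    have hppre : (hf x).re = G x + ε := hfre x (mem_ball_self hr'pos)
    set Φ : ℂ → ℂ := fun w => (hf w - hf x) / (hf w + (starRingEnd ℂ) (hf x)) with hΦ
    have hfrepos : ∀ w ∈ ball x rs, 0 < (hf w).re := by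
      intro w hw
      rw [hfre w (hsub2 hw)]
      have := hGnonneg w; linarith
    have hppos : 0 < (hf x).re := by rw [hppre]; have := hGnonneg x; linarith
    have hdenre : ∀ w ∈ ball x rs, 0 < (hf w + (starRingEnd ℂ) (hf x)).re := by
      intro w hw
      rw [Complex.add_re, Complex.conj_re]
      have := hfrepos w hw; linarith
    have hdenne : ∀ w ∈ ball x rs, (hf w + (starRingEnd ℂ) (hf x)) ≠ 0 := by
      intro w hw h0
      have h1 := hdenre w hw; rw [h0] at h1; simp at h1
    have hΦdiff : DifferentiableOn ℂ Φ (ball x rs) := by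
      apply DifferentiableOn.div
      · exact ((hfdiff.mono hsub2).sub_const (hf x))
      · exact ((hfdiff.mono hsub2).add_const _)
      · exact hdenne
    have hΦx : Φ x = 0 := by rw [hΦ]; simp
    have habs : ∀ w ∈ ball x rs,
        ‖hf w - hf x‖ < ‖hf w + (starRingEnd ℂ) (hf x)‖ := by
      intro w hw
      have h1 : Complex.normSq (hf w - hf x)
          < Complex.normSq (hf w + (starRingEnd ℂ) (hf x)) := by
        simp only [Complex.normSq_apply, Complex.sub_re, Complex.sub_im, Complex.add_re,
          Complex.add_im, Complex.conj_re, Complex.conj_im]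
        have h2 := hfrepos w hw
        nlinarith [h2, hppos]
      have h3 := Real.sqrt_lt_sqrt (Complex.normSq_nonneg _) h1
      rwa [← Complex.norm_def, ← Complex.norm_def] at h3
    have hmaps : MapsTo Φ (ball x rs) (ball (Φ x) 1) := by
      intro w hw
      rw [hΦx, mem_ball, dist_zero_right, hΦ]
      simp only [norm_div]
      rw [div_lt_one]
      · exact habs w hw
      · exact norm_pos_iff.mpr (hdenne w hw)
    have hSch := Complex.dist_le_div_mul_dist_of_mapsTo_ball hΦdiff (fun w hw => ball_subset_closedBall (hmaps hw)) hyrs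
    rw [hΦx, dist_eq_norm, sub_zero] at hSch
    have hdist : dist y x = ‖x - y‖ := by
      rw [dist_eq_norm, norm_sub_rev]
    rw [hdist] at hSch
    have hΦy : ‖Φ y‖ = ‖hf y - hf x‖
        / ‖hf y + (starRingEnd ℂ) (hf x)‖ := by
      rw [hΦ]; simp only [norm_div]
    have hden := norm_pos_iff.mpr (hdenne y hyrs)
    have hnum : ‖hf y - hf x‖
        ≤ t * ‖hf y + (starRingEnd ℂ) (hf x)‖ := by
      have h1 : ‖Φ y‖ ≤ t := by
        rw [htdef]
        calc ‖Φ y‖ ≤ 1 / rs * ‖x - y‖ := hSch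
          _ = ‖x - y‖ / rs := by ring
      rw [hΦy, div_le_iff₀ hden] at h1
      exact h1
    have hsq : Complex.normSq (hf y - hf x)
        ≤ t^2 * Complex.normSq (hf y + (starRingEnd ℂ) (hf x)) := by
      calc Complex.normSq (hf y - hf x)
          = ‖hf y - hf x‖ * ‖hf y - hf x‖ :=
            by rw [Complex.normSq_eq_norm_sq, sq]
        _ ≤ (t * ‖hf y + (starRingEnd ℂ) (hf x)‖)
            * (t * ‖hf y + (starRingEnd ℂ) (hf x)‖) :=
            mul_le_mul hnum hnum (norm_nonneg _) (by positivity)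
        _ = t^2 * (‖hf y + (starRingEnd ℂ) (hf x)‖
            * ‖hf y + (starRingEnd ℂ) (hf x)‖) := by ring
        _ = t^2 * Complex.normSq (hf y + (starRingEnd ℂ) (hf x)) := by
            rw [Complex.normSq_eq_norm_sq]; ring
    set uu := (hf x).re with huudef
    set vv := (hf y).re with hvvdef
    have he1 : vv = G y + ε := hfre y (hsub2 hyrs)
    have he2 : uu = G x + ε := hppre
    have hD1 : Complex.normSq (hf y - hf x) = (vv - uu)^2 + ((hf y).im - (hf x).im)^2 := by
      simp only [Complex.normSq_apply, Complex.sub_re, Complex.sub_im, huudef, hvvdef]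
      ring
    have hD2 : Complex.normSq (hf y + (starRingEnd ℂ) (hf x))
        = (vv + uu)^2 + ((hf y).im - (hf x).im)^2 := by
      simp only [Complex.normSq_apply, Complex.add_re, Complex.add_im, Complex.conj_re,
        Complex.conj_im, huudef, hvvdef]
      ring
    rw [hD1, hD2] at hsq
    set D : ℝ := ((hf y).im - (hf x).im)^2 with hDdef
    have hDnn : 0 ≤ D := sq_nonneg _
    have huu : 0 < uu := hppos
    have hvv : 0 < vv := hfrepos y hyrs
    clear_value uu vv D
    have key : uu - vv ≤ 2*t*uu := by
      rcases le_or_gt uu vv with hc | hc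
      · nlinarith [mul_nonneg ht0 huu.le]
      · have ht2 : t^2 ≤ 1 := by nlinarith
        have ha2 : (uu - vv)^2 ≤ (t*(uu+vv))^2 := by
          nlinarith [mul_le_mul_of_nonneg_right ht2 hDnn]
        have hb : 0 ≤ t*(uu+vv) := by positivity
        have h4 : |uu - vv| ≤ |t*(uu+vv)| := by
          have h5 := Real.sqrt_le_sqrt ha2
          rwa [Real.sqrt_sq_eq_abs, Real.sqrt_sq_eq_abs] at h5
        have h6 : uu - vv ≤ t*(uu+vv) := (le_abs_self _).trans (by rwa [abs_of_nonneg hb] at h4)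
        have h7 : t*vv ≤ t*uu := mul_le_mul_of_nonneg_left hc.le ht0
        linarith
    rw [← he2]
    linarith [key, he1, he2]
  refine le_of_forall_pos_le_add ?_
  intro ε' hε'
  have h1 := hystep (ε' / (2*t+1)) (by positivity)
  have h2 : 2*t/(2*t+1) ≤ 1 := by
    rw [div_le_one (by positivity)]; linarith
  calc G x - G y ≤ 2*t*(G x + ε'/(2*t+1)) := h1
    _ = 2*t*G x + (2*t/(2*t+1))*ε' := by ring
    _ ≤ 2*t*G x + 1*ε' := by
        have h3 := mul_le_mul_of_nonneg_right h2 hε'.le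
        linarith
    _ = 2 * (‖x - y‖ / rs) * G x + ε' := by rw [htdef]; ring

/-- uniform Hölder continuity of the escape-rate function of a
monic complex polynomial: `|G_f(z₁) − G_f(z₂)| ≤ 3dM|z₁ − z₂|^α`. -/
theorem stmt12 (d : ℕ) (hd : 2 ≤ d) (a : ℕ → ℂ) (f : ℂ → ℂ)
    (hf : ∀ z, f z = z ^ d + ∑ i ∈ Finset.range d, a i * z ^ i)
    (K : Set ℂ) (hK : K = {z | ∃ C, ∀ n, ‖f^[n] z‖ ≤ C})
    (R M A α : ℝ)
    (hR : R = 3 * (Finset.range d).sup' (Finset.nonempty_range_iff.mpr (by omega))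
      (fun i => max 1 (‖a i‖ ^ ((1 : ℝ) / ((d - i : ℕ) : ℝ)))))
    (hM : M = Real.log (2 * R + 1))
    (hA : A = 3 * d / 2 * (R + 1) ^ (d - 1))
    (hα : α = Real.log d / Real.log A)
    (G : ℂ → ℝ)
    (hGcont : Continuous G)
    (hGnonneg : ∀ z, 0 ≤ G z)
    (hharm : ∀ z ∉ K, ∃ r > (0 : ℝ), ∃ h : ℂ → ℂ,
      DifferentiableOn ℂ h (Metric.ball z r) ∧
      ∀ w ∈ Metric.ball z r, G w = (h w).re)
    (hasymp : Tendsto (fun z : ℂ => G z - Real.log ‖z‖)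
      (Filter.comap (fun z : ℂ => ‖z‖) atTop) (nhds 0))
    (hbound : ∀ z : ℂ, G z ≤ d * M * (Metric.infDist z K) ^ α) :
    ∀ z₁ z₂ : ℂ, |G z₁ - G z₂| ≤ 3 * d * M * ‖z₁ - z₂‖ ^ α := by
  have hd2 : (2:ℝ) ≤ (d:ℝ) := by exact_mod_cast hd
  have hR3 : (3:ℝ) ≤ R := by
    rw [hR]
    have h0 : (0:ℕ) ∈ Finset.range d := Finset.mem_range.mpr (by omega)
    have h1 : (1:ℝ) ≤ (Finset.range d).sup' (Finset.nonempty_range_iff.mpr (by omega))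
        (fun i => max 1 (‖a i‖ ^ ((1 : ℝ) / ((d - i : ℕ) : ℝ)))) :=
      le_trans (le_max_left _ _)
        (Finset.le_sup' (f := fun i => max 1 (‖a i‖ ^ ((1 : ℝ) / ((d - i : ℕ) : ℝ)))) h0)
    linarith
  have hM0 : 0 ≤ M := by rw [hM]; exact Real.log_nonneg (by linarith)
  have hA1 : (d:ℝ) ≤ A := by
    rw [hA]
    have h1 : (1:ℝ) ≤ (R+1)^(d-1) := one_le_pow₀ (by linarith)
    nlinarith
  have hlogA : 0 < Real.log A := Real.log_pos (by linarith)
  have hα0 : 0 < α := by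
    rw [hα]; exact div_pos (Real.log_pos (by linarith)) hlogA
  have hα1 : α ≤ 1 := by
    rw [hα, div_le_one hlogA]
    exact Real.log_le_log (by linarith) hA1
  have hdM : 0 ≤ (d:ℝ)*M := mul_nonneg (Nat.cast_nonneg d) hM0
  have key : ∀ x y : ℂ, G x - G y ≤ 3 * d * M * ‖x - y‖ ^ α := by
    intro x y
    rcases eq_or_lt_of_le (norm_nonneg (x - y)) with hρz | hρpos
    · have hxy : x = y := sub_eq_zero.mp (norm_eq_zero.mp hρz.symm)
      simp [hxy, Real.zero_rpow (ne_of_gt hα0)]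
    · have hρ0 : 0 ≤ ‖x - y‖ := (norm_nonneg _)
      have hr₁0 : 0 ≤ Metric.infDist x K := Metric.infDist_nonneg
      have hρα : 0 ≤ ‖x - y‖ ^ α := Real.rpow_nonneg hρ0 α
      rcases le_or_gt (Metric.infDist x K) (3 * ‖x - y‖) with hcase | hcase
      · have h1 : G x ≤ d * M * (Metric.infDist x K) ^ α := hbound x
        have h2 : (Metric.infDist x K) ^ α ≤ (3 * ‖x - y‖) ^ α :=
          Real.rpow_le_rpow hr₁0 hcase hα0.le
        have h3 : (3 * ‖x - y‖) ^ α = 3 ^ α * ‖x - y‖ ^ α :=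
          Real.mul_rpow (by norm_num) hρ0
        have h4 : (3:ℝ) ^ α ≤ 3 := by
          calc (3:ℝ)^α ≤ 3^(1:ℝ) := Real.rpow_le_rpow_of_exponent_le (by norm_num) hα1
            _ = 3 := Real.rpow_one 3
        calc G x - G y ≤ G x := by linarith [hGnonneg y]
          _ ≤ d * M * (Metric.infDist x K) ^ α := h1
          _ ≤ d * M * (3 * ‖x - y‖) ^ α := mul_le_mul_of_nonneg_left h2 hdM
          _ = d * M * (3 ^ α * ‖x - y‖ ^ α) := by rw [h3]
          _ ≤ d * M * (3 * ‖x - y‖ ^ α) :=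
              mul_le_mul_of_nonneg_left (mul_le_mul_of_nonneg_right h4 hρα) hdM
          _ = 3 * d * M * ‖x - y‖ ^ α := by ring
      · have hr₁pos : 0 < Metric.infDist x K := by linarith
        have hdisj : ∀ w ∈ Metric.ball x (Metric.infDist x K), w ∉ K := by
          intro w hw hwK
          have h1 : Metric.infDist x K ≤ dist x w := Metric.infDist_le_dist_of_mem hwK
          rw [Metric.mem_ball, dist_comm] at hw
          linarith
        have hHar := aux_harnack hGnonneg hharm hr₁pos hdisj
          (by linarith : ‖x - y‖ < 2/3 * Metric.infDist x K)
        have h2 : G x ≤ d * M * (Metric.infDist x K) ^ α := hbound x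
        have h3 : ‖x - y‖ / Metric.infDist x K
            ≤ (‖x - y‖ / Metric.infDist x K) ^ α := by
          have h4 : 0 < ‖x - y‖ / Metric.infDist x K := div_pos hρpos hr₁pos
          have h5 : ‖x - y‖ / Metric.infDist x K ≤ 1 := by
            rw [div_le_one hr₁pos]; linarith
          calc ‖x - y‖ / Metric.infDist x K
              = (‖x - y‖ / Metric.infDist x K) ^ (1:ℝ) := (Real.rpow_one _).symm
            _ ≤ (‖x - y‖ / Metric.infDist x K) ^ α :=
                Real.rpow_le_rpow_of_exponent_ge h4 h5 hα1
        have h6 : (‖x - y‖ / Metric.infDist x K) ^ α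
            * (Metric.infDist x K) ^ α = ‖x - y‖ ^ α := by
          rw [← Real.mul_rpow (by positivity) hr₁0]
          congr 1
          field_simp
        have h7 : 2 * (‖x - y‖ / (2/3 * Metric.infDist x K))
            = 3 * (‖x - y‖ / Metric.infDist x K) := by
          field_simp
        have h8 : 0 ≤ d * M * (Metric.infDist x K) ^ α :=
          mul_nonneg hdM (Real.rpow_nonneg hr₁0 α)
        calc G x - G y
            ≤ 2 * (‖x - y‖ / (2/3 * Metric.infDist x K)) * G x := hHar
          _ = 3 * (‖x - y‖ / Metric.infDist x K) * G x := by rw [h7]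
          _ ≤ 3 * (‖x - y‖ / Metric.infDist x K)
              * (d * M * (Metric.infDist x K) ^ α) := by
              apply mul_le_mul_of_nonneg_left h2
              positivity
          _ ≤ 3 * (‖x - y‖ / Metric.infDist x K) ^ α
              * (d * M * (Metric.infDist x K) ^ α) :=
              mul_le_mul_of_nonneg_right (by linarith) h8
          _ = 3 * d * M * ((‖x - y‖ / Metric.infDist x K) ^ α
              * (Metric.infDist x K) ^ α) := by ring
          _ = 3 * d * M * ‖x - y‖ ^ α := by rw [h6]
  intro z₁ z₂
  rw [abs_sub_le_iff]
  constructor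
  · exact key z₁ z₂
  · have h1 := key z₂ z₁
    rwa [show ‖z₂ - z₁‖ = ‖z₁ - z₂‖ from by
      rw [← neg_sub z₁ z₂, norm_neg]] at h1
end

section
/- Let f, g be monic complex polynomials of the same degree d ≥ 2 with coefficients a_{d-1},...,a_0 and b_{d-1},...,b_0 respectively, and let μ_f, μ_g be their equilibrium (invariant) measures on ℂ. If a_{d-j} = b_{d-j} for all 1 ≤ j < k for some k < d, then ∫ z^k dμ_f(z) − ∫ z^k dμ_g(z) = −(k/d)(a_{d-k} − b_{d-k}). -/
open MeasureTheory Polynomial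


/-- Power sum of a multiset. -/
noncomputable def mpsum (s : Multiset ℂ) (n : ℕ) : ℂ := (s.map (· ^ n)).sum

lemma mpsum_zero (s : Multiset ℂ) : mpsum s 0 = (Multiset.card s : ℂ) := by
  simp [mpsum]

/-- Newton's identity for multisets over ℂ. -/
lemma mpsum_newton (s : Multiset ℂ) (k : ℕ) (hk : 0 < k) :
    mpsum s k = (-1) ^ (k + 1) * k * s.esymm k -
      ∑ a ∈ Finset.HasAntidiagonal.antidiagonal k with a.1 ∈ Set.Ioo 0 k,
        (-1) ^ a.1 * s.esymm a.1 * mpsum s a.2 := by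
  classical
  set l := s.toList with hl
  have hsl : (l : Multiset ℂ) = s := s.coe_toList
  have key := congrArg (MvPolynomial.aeval l.get)
    (MvPolynomial.psum_eq_mul_esymm_sub_sum (Fin l.length) ℂ k hk)
  have huniv : (Finset.univ.val.map l.get) = s := by
    rw [Fin.univ_val_map, List.ofFn_get, hsl]
  have haepsum : ∀ n, MvPolynomial.aeval l.get (MvPolynomial.psum (Fin l.length) ℂ n)
      = mpsum s n := by
    intro n
    simp only [MvPolynomial.psum, map_sum, map_pow, MvPolynomial.aeval_X]
    rw [mpsum, ← huniv, Multiset.map_map]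
    rfl
  have haeesymm : ∀ n, MvPolynomial.aeval l.get (MvPolynomial.esymm (Fin l.length) ℂ n)
      = s.esymm n := by
    intro n
    rw [MvPolynomial.aeval_esymm_eq_multiset_esymm, huniv]
  rw [haepsum] at key
  rw [key]
  simp only [map_sub, map_sum, map_mul, map_pow, map_neg, map_one, map_natCast,
    haepsum, haeesymm]

lemma mpsum_congr (k : ℕ) : ∀ (s t : Multiset ℂ), Multiset.card s = Multiset.card t →
    (∀ j, 1 ≤ j → j ≤ k → s.esymm j = t.esymm j) → mpsum s k = mpsum t k := by
  induction k using Nat.strong_induction_on with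
  | _ k ih =>
    intro s t hcard hes
    rcases Nat.eq_zero_or_pos k with hk | hk
    · subst hk; rw [mpsum_zero, mpsum_zero, hcard]
    · rw [mpsum_newton s k hk, mpsum_newton t k hk, hes k hk le_rfl]
      congr 1
      refine Finset.sum_congr rfl ?_
      intro a ha
      simp only [Finset.mem_filter, Finset.HasAntidiagonal.mem_antidiagonal, Set.mem_Ioo] at ha
      obtain ⟨hsum, h0, hlt⟩ := ha
      have ha2 : a.2 < k := by omega
      rw [hes a.1 h0 (le_of_lt hlt),
        ih a.2 ha2 s t hcard (fun j hj1 hj2 => hes j hj1 (by omega))]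

lemma mpsum_sub (k : ℕ) (hk : 0 < k) (s t : Multiset ℂ)
    (hcard : Multiset.card s = Multiset.card t)
    (hes : ∀ j, 1 ≤ j → j < k → s.esymm j = t.esymm j) :
    mpsum s k - mpsum t k = (-1) ^ (k + 1) * k * (s.esymm k - t.esymm k) := by
  rw [mpsum_newton s k hk, mpsum_newton t k hk]
  have : (∑ a ∈ Finset.HasAntidiagonal.antidiagonal k with a.1 ∈ Set.Ioo 0 k,
        (-1 : ℂ) ^ a.1 * s.esymm a.1 * mpsum s a.2)
      = ∑ a ∈ Finset.HasAntidiagonal.antidiagonal k with a.1 ∈ Set.Ioo 0 k,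
        (-1) ^ a.1 * t.esymm a.1 * mpsum t a.2 := by
    refine Finset.sum_congr rfl ?_
    intro a ha
    simp only [Finset.mem_filter, Finset.HasAntidiagonal.mem_antidiagonal, Set.mem_Ioo] at ha
    obtain ⟨hsum, h0, hlt⟩ := ha
    rw [hes a.1 h0 hlt,
      mpsum_congr a.2 s t hcard (fun j hj1 hj2 => hes j hj1 (by omega))]
  rw [this]; ring

lemma esymm_roots_eq (P : Polynomial ℂ) (d j : ℕ) (hPm : P.Monic) (hPd : P.natDegree = d)
    (hj : j ≤ d) : P.roots.esymm j = (-1) ^ j * P.coeff (d - j) := by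
  have hsplits : P.Splits := IsAlgClosed.splits P
  have h := Polynomial.coeff_eq_esymm_roots_of_splits hsplits
    (k := d - j) (by omega : d - j ≤ P.natDegree)
  rw [hPm.leadingCoeff, hPd] at h
  have hdj : d - (d - j) = j := by omega
  rw [hdj] at h
  rw [h]
  ring_nf
  rw [mul_comm j 2, pow_mul]
  norm_num

lemma card_roots_eq (P : Polynomial ℂ) (hP : P ≠ 0) : Multiset.card P.roots = P.natDegree :=
  (Polynomial.splits_iff_card_roots).1 (IsAlgClosed.splits P)

lemma shifted_monic (P : Polynomial ℂ) (d : ℕ) (hPm : P.Monic) (hPd : P.natDegree = d)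
    (hd : 1 ≤ d) (c : ℂ) :
    (P - Polynomial.C c).Monic ∧ (P - Polynomial.C c).natDegree = d := by
  have hnd : (P - Polynomial.C c).natDegree = d := by
    rw [Polynomial.natDegree_sub_C, hPd]
  refine ⟨?_, hnd⟩
  unfold Polynomial.Monic Polynomial.leadingCoeff
  rw [hnd, Polynomial.coeff_sub, Polynomial.coeff_C, if_neg (by omega), sub_zero,
    ← hPd]
  exact hPm

lemma moment_eq (d k : ℕ) (hd : 2 ≤ d) (hk1 : 1 ≤ k) (hkd : k < d)
    (P : Polynomial ℂ) (hPm : P.Monic) (hPd : P.natDegree = d)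
    (μ : Measure ℂ) [IsProbabilityMeasure μ]
    (hμ : ∀ φ : ℂ → ℂ, Continuous φ →
      ∫ z, φ z ∂μ = (d : ℂ)⁻¹ * ∫ c, ((P - Polynomial.C c).roots.map φ).sum ∂μ) :
    ∫ z, z ^ k ∂μ = (d : ℂ)⁻¹ * mpsum P.roots k := by
  rw [hμ (fun z => z ^ k) (continuous_pow k)]
  congr 1
  have hconst : ∀ c : ℂ, (((P - Polynomial.C c).roots.map fun z => z ^ k)).sum
      = mpsum P.roots k := by
    intro c
    obtain ⟨hm, hnd⟩ := shifted_monic P d hPm hPd (by omega) c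
    have hcard : Multiset.card (P - Polynomial.C c).roots = Multiset.card P.roots := by
      rw [card_roots_eq _ (hm.ne_zero), card_roots_eq _ (hPm.ne_zero), hnd, hPd]
    refine mpsum_congr k _ _ hcard ?_
    intro j hj1 hjk
    rw [esymm_roots_eq _ d j hm hnd (by omega), esymm_roots_eq _ d j hPm hPd (by omega),
      Polynomial.coeff_sub, Polynomial.coeff_C, if_neg (by omega : ¬ (d - j = 0)), sub_zero]
  calc ∫ c, (((P - Polynomial.C c).roots.map fun z => z ^ k)).sum ∂μ
      = ∫ _, mpsum P.roots k ∂μ := by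
        exact integral_congr_ae (Filter.Eventually.of_forall hconst)
    _ = mpsum P.roots k := by simp

/-- difference of `k`-th moments of the equilibrium measures of two
monic polynomials agreeing in their first `k-1` coefficients. -/
theorem stmt13 (d k : ℕ) (hd : 2 ≤ d) (hk1 : 1 ≤ k) (hkd : k < d)
    (F G : Polynomial ℂ) (hFm : F.Monic) (hFd : F.natDegree = d)
    (hGm : G.Monic) (hGd : G.natDegree = d)
    (μf μg : Measure ℂ)
    [IsProbabilityMeasure μf] [IsProbabilityMeasure μg]
    (hμf : ∀ φ : ℂ → ℂ, Continuous φ →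
      ∫ z, φ z ∂μf = (d : ℂ)⁻¹ * ∫ c, ((F - C c).roots.map φ).sum ∂μf)
    (hμg : ∀ φ : ℂ → ℂ, Continuous φ →
      ∫ z, φ z ∂μg = (d : ℂ)⁻¹ * ∫ c, ((G - C c).roots.map φ).sum ∂μg)
    (hcoef : ∀ j, 1 ≤ j → j < k → F.coeff (d - j) = G.coeff (d - j)) :
    (∫ z, z ^ k ∂μf) - (∫ z, z ^ k ∂μg) =
      -((k : ℂ) / (d : ℂ)) * (F.coeff (d - k) - G.coeff (d - k)) := by
  rw [moment_eq d k hd hk1 hkd F hFm hFd μf hμf,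
    moment_eq d k hd hk1 hkd G hGm hGd μg hμg]
  have hcard : Multiset.card F.roots = Multiset.card G.roots := by
    rw [card_roots_eq _ hFm.ne_zero, card_roots_eq _ hGm.ne_zero, hFd, hGd]
  have hes : ∀ j, 1 ≤ j → j < k → F.roots.esymm j = G.roots.esymm j := by
    intro j hj1 hjk
    rw [esymm_roots_eq F d j hFm hFd (by omega), esymm_roots_eq G d j hGm hGd (by omega),
      hcoef j hj1 hjk]
  have hsub := mpsum_sub k (by omega) F.roots G.roots hcard hes
  rw [esymm_roots_eq F d k hFm hFd (by omega), esymm_roots_eq G d k hGm hGd (by omega)] at hsub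
  have h1 : ((-1 : ℂ)) ^ (k + 1) * (-1) ^ k = -1 := by
    rw [← pow_add]
    exact Odd.neg_one_pow ⟨k, by ring⟩
  have hdne : (d : ℂ) ≠ 0 := Nat.cast_ne_zero.mpr (by omega)
  have : mpsum F.roots k - mpsum G.roots k
      = -(k : ℂ) * (F.coeff (d - k) - G.coeff (d - k)) := by
    rw [hsub]
    have : (-1 : ℂ) ^ (k + 1) * (k : ℂ) *
        ((-1) ^ k * F.coeff (d - k) - (-1) ^ k * G.coeff (d - k))
        = ((-1 : ℂ) ^ (k + 1) * (-1) ^ k) * ((k : ℂ) * (F.coeff (d - k) - G.coeff (d - k))) := by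
      ring
    rw [this, h1]; ring
  rw [← mul_sub, this]
  field_simp
end

section
/- Fix d ≥ 1 and ε > 0, and consider pairs of tuples of nonzero-denominator rationals (a_0, ..., a_{d-2}; b_0, ..., b_{d-1}), all of Weil height ≤ log X, chosen uniformly at random. Call the pair ε-ordinary if rad(denom(c)) ≥ X^{1−2ε} for every coefficient c, and gcd(denom(c), denom(c')) ≤ X^{2ε} for every pair of distinct coefficients c, c'. Then the proportion of pairs that are ε-ordinary is 1 − O_ε(d²X^{−ε}). -/
lemma squarefree_dvd_rad {s n : ℕ} (hs : Squarefree s) (h : s ∣ n) (hn : n ≠ 0) :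
    s ∣ rad n := by
  have hsub : s.primeFactors ⊆ n.primeFactors := Nat.primeFactors_mono h hn
  calc s = ∏ p ∈ s.primeFactors, p := (Nat.prod_primeFactors_of_squarefree hs).symm
  _ ∣ rad n := Finset.prod_dvd_prod_of_subset _ _ _ hsub

lemma sum_Icc_inv_sq' (k : ℕ) (hk : 1 ≤ k) :
    ∀ m : ℕ, k ≤ m + 1 → ∑ b ∈ Finset.Icc k m, (1 : ℝ) / (b : ℝ) ^ 2 ≤ 2 / k - 2 / (m + 1) := by
  intro m
  induction m with
  | zero =>
    intro h
    interval_cases k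
    · simp
  | succ m ih =>
    intro h
    rcases Nat.lt_or_ge k (m + 2) with h1 | h1
    · have hk1 : k ≤ m + 1 := Nat.lt_succ_iff.mp h1
      rw [Finset.sum_Icc_succ_top hk1]
      have := ih hk1
      have hm1 : (0:ℝ) < (m:ℝ) + 1 := by positivity
      have hm2 : (0:ℝ) < (m:ℝ) + 2 := by positivity
      have key : (1:ℝ) / ((m+1:ℕ):ℝ)^2 ≤ 2 / ((m:ℝ)+1) - 2 / ((m:ℝ)+2) := by
        push_cast
        rw [div_sub_div _ _ (ne_of_gt hm1) (ne_of_gt hm2),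
          div_le_div_iff₀ (by positivity) (by positivity)]
        ring_nf
        nlinarith [sq_nonneg ((m:ℝ))]
      have heq : ((m+1:ℕ):ℝ) + 1 = (m:ℝ) + 2 := by push_cast; ring
      rw [heq]
      linarith
    · have hk2 : k = m + 2 := le_antisymm h h1
      subst hk2
      rw [Finset.Icc_eq_empty (by omega)]
      simp only [Finset.sum_empty]
      have e : (((m:ℕ)+2 : ℕ):ℝ) = (m:ℝ)+1+1 := by push_cast; ring
      rw [e]
      have e2 : ((m+1:ℕ):ℝ)+1 = (m:ℝ)+1+1 := by push_cast; ring
      rw [e2]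
      simp

lemma sum_Icc_inv_sq (k m : ℕ) (hk : 1 ≤ k) :
    ∑ b ∈ Finset.Icc k m, (1 : ℝ) / (b : ℝ) ^ 2 ≤ 2 / k := by
  rcases Nat.lt_or_ge m k with h | h
  · rw [Finset.Icc_eq_empty (by omega)]
    simp
    positivity
  · have h1 : (0:ℝ) < (m:ℝ)+1 := by positivity
    have h2 : (0:ℝ) ≤ 2 / ((m:ℝ)+1) := by positivity
    linarith [sum_Icc_inv_sq' k hk m (by omega)]

lemma countD (X y : ℝ) (hX : 1 ≤ X) (hy : 0 < y) :
    (((Finset.Icc 1 ⌊X⌋₊).filter fun n => (rad n : ℝ) < y).card : ℝ)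
      ≤ 3 * Real.sqrt (X * y) := by
  set M := ⌊X⌋₊ with hM
  have hXpos : (0:ℝ) < X := by linarith
  have hMX : (M:ℝ) ≤ X := Nat.floor_le (le_of_lt hXpos)
  rcases le_or_gt y X with hyX | hyX
  · set B := Real.sqrt (X / y) with hBdef
    have hXy : (0:ℝ) < X / y := by positivity
    have hB : (0:ℝ) < B := Real.sqrt_pos.mpr hXy
    set T := (Finset.Icc 1 M ×ˢ Finset.Icc 1 M).filter
        (fun p : ℕ × ℕ => ((p.1:ℝ) < y ∧ ((p.1:ℝ) * (p.2:ℝ)^2 ≤ X))) with hT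
    have hsurj : Set.SurjOn (fun p : ℕ × ℕ => p.1 * p.2^2) ↑T
        ↑((Finset.Icc 1 M).filter fun n => (rad n : ℝ) < y) := by
      intro n hn
      simp only [Finset.coe_filter, Set.mem_setOf_eq, Finset.mem_Icc] at hn
      obtain ⟨⟨hn1, hnM⟩, hrad⟩ := hn
      obtain ⟨a, b, ha, hb, hab, hsq⟩ := Nat.sq_mul_squarefree_of_pos (by omega : 0 < n)
      have hdvd : a ∣ rad n := squarefree_dvd_rad hsq ⟨b^2, by rw [← hab]; ring⟩ (by omega)
      have haraD : a ≤ rad n := Nat.le_of_dvd (rad_pos n) hdvd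
      have han : a ≤ n := Nat.le_of_dvd (by omega) ⟨b^2, by rw [← hab]; ring⟩
      have hbn : b ≤ n := by nlinarith
      refine ⟨(a, b), ?_, ?_⟩
      · simp only [hT, Finset.mem_coe, Finset.mem_filter, Finset.mem_product, Finset.mem_Icc]
        refine ⟨⟨⟨ha, le_trans han hnM⟩, ⟨hb, le_trans hbn hnM⟩⟩, ?_, ?_⟩
        · calc (a:ℝ) ≤ (rad n : ℝ) := by exact_mod_cast haraD
          _ < y := hrad
        · have e1 : (a:ℝ)*(b:ℝ)^2 = ((a * b^2 : ℕ):ℝ) := by push_cast; ring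
          have e2 : a * b^2 = n := by rw [← hab]; ring
          rw [e1, e2]
          calc (n:ℝ) ≤ (M:ℝ) := by exact_mod_cast hnM
          _ ≤ X := hMX
      · simp only
        rw [← hab]; ring
    have hcard1 : ((Finset.Icc 1 M).filter fun n => (rad n : ℝ) < y).card ≤ T.card :=
      Finset.card_le_card_of_surjOn _ hsurj
    have hfib : T.card = ∑ b ∈ Finset.Icc 1 M, (T.filter (fun p => p.2 = b)).card := by
      apply Finset.card_eq_sum_card_fiberwise
      intro p hp
      simp only [hT, Finset.mem_coe, Finset.mem_filter, Finset.mem_product] at hp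
      exact hp.1.2
    have hfibbound : ∀ b ∈ Finset.Icc 1 M, ((T.filter (fun p => p.2 = b)).card : ℝ)
        ≤ if (b:ℝ) ≤ B then y else X / (b:ℝ)^2 := by
      intro b hb
      simp only [Finset.mem_Icc] at hb
      have hbpos : (0:ℝ) < (b:ℝ) := by exact_mod_cast hb.1
      have hinj : (T.filter (fun p => p.2 = b)).card ≤
          ((Finset.Icc 1 M).filter (fun s : ℕ => (s:ℝ) < y ∧ (s:ℝ)*(b:ℝ)^2 ≤ X)).card := by
        apply Finset.card_le_card_of_injOn (fun p => p.1)
        · intro p hp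
          simp only [hT, Finset.mem_coe, Finset.mem_filter, Finset.mem_product, Finset.mem_Icc] at hp ⊢
          obtain ⟨⟨⟨hpa, hpb⟩, hy1, hy2⟩, hpb2⟩ := hp
          exact ⟨hpa, hy1, by rw [← hpb2]; exact hy2⟩
        · intro p hp q hq hpq
          simp only [Finset.coe_filter, Set.mem_setOf_eq] at hp hq
          have h1 : p.1 = q.1 := hpq
          have h2 : p.2 = q.2 := by rw [hp.2, hq.2]
          exact Prod.ext h1 h2
      have hinj' : ((T.filter (fun p => p.2 = b)).card : ℝ) ≤
          (((Finset.Icc 1 M).filter (fun s : ℕ => (s:ℝ) < y ∧ (s:ℝ)*(b:ℝ)^2 ≤ X)).card : ℝ) :=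
        Nat.cast_le.mpr hinj
      refine le_trans hinj' ?_
      by_cases hcase : (b:ℝ) ≤ B
      · rw [if_pos hcase]
        have hsub : ((Finset.Icc 1 M).filter (fun s : ℕ => (s:ℝ) < y ∧ (s:ℝ)*(b:ℝ)^2 ≤ X))
            ⊆ Finset.Icc 1 ⌊y⌋₊ := by
          intro s hs
          simp only [Finset.mem_filter, Finset.mem_Icc] at hs ⊢
          exact ⟨hs.1.1, Nat.le_floor (le_of_lt hs.2.1)⟩
        calc (((Finset.Icc 1 M).filter (fun s : ℕ => (s:ℝ) < y ∧ (s:ℝ)*(b:ℝ)^2 ≤ X)).card : ℝ)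
            ≤ ((Finset.Icc 1 ⌊y⌋₊).card : ℝ) := by exact_mod_cast Finset.card_le_card hsub
        _ = (⌊y⌋₊ : ℝ) := by rw [Nat.card_Icc]; simp
        _ ≤ y := Nat.floor_le (le_of_lt hy)
      · rw [if_neg hcase]
        have hsub : ((Finset.Icc 1 M).filter (fun s : ℕ => (s:ℝ) < y ∧ (s:ℝ)*(b:ℝ)^2 ≤ X))
            ⊆ Finset.Icc 1 ⌊X/(b:ℝ)^2⌋₊ := by
          intro s hs
          simp only [Finset.mem_filter, Finset.mem_Icc] at hs ⊢
          refine ⟨hs.1.1, Nat.le_floor ?_⟩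
          rw [le_div_iff₀ (by positivity)]
          exact hs.2.2
        calc (((Finset.Icc 1 M).filter (fun s : ℕ => (s:ℝ) < y ∧ (s:ℝ)*(b:ℝ)^2 ≤ X)).card : ℝ)
            ≤ ((Finset.Icc 1 ⌊X/(b:ℝ)^2⌋₊).card : ℝ) := by exact_mod_cast Finset.card_le_card hsub
        _ = (⌊X/(b:ℝ)^2⌋₊ : ℝ) := by rw [Nat.card_Icc]; simp
        _ ≤ X/(b:ℝ)^2 := Nat.floor_le (by positivity)
    have hsum : (T.card : ℝ) ≤ ∑ b ∈ Finset.Icc 1 M, (if (b:ℝ) ≤ B then y else X / (b:ℝ)^2) := by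
      rw [hfib]
      push_cast
      exact Finset.sum_le_sum hfibbound
    have hsplit : ∑ b ∈ Finset.Icc 1 M, (if (b:ℝ) ≤ B then y else X / (b:ℝ)^2)
        ≤ y * B + X * (2 / ((⌊B⌋₊:ℝ) + 1)) := by
      rw [← Finset.sum_filter_add_sum_filter_not (Finset.Icc 1 M) (fun b : ℕ => (b:ℝ) ≤ B)]
      have h1 : ∑ b ∈ (Finset.Icc 1 M).filter (fun b : ℕ => (b:ℝ) ≤ B),
          (if (b:ℝ) ≤ B then y else X / (b:ℝ)^2) ≤ y * B := by
        rw [Finset.sum_congr rfl (fun b hb => if_pos (Finset.mem_filter.mp hb).2)]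
        rw [Finset.sum_const, nsmul_eq_mul]
        have hc : ((Finset.Icc 1 M).filter (fun b : ℕ => (b:ℝ) ≤ B)).card ≤ ⌊B⌋₊ := by
          have hss : (Finset.Icc 1 M).filter (fun b : ℕ => (b:ℝ) ≤ B) ⊆ Finset.Icc 1 ⌊B⌋₊ := by
            intro b hb
            simp only [Finset.mem_filter, Finset.mem_Icc] at hb ⊢
            exact ⟨hb.1.1, Nat.le_floor hb.2⟩
          calc ((Finset.Icc 1 M).filter (fun b : ℕ => (b:ℝ) ≤ B)).card
              ≤ (Finset.Icc 1 ⌊B⌋₊).card := Finset.card_le_card hss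
          _ = ⌊B⌋₊ := by rw [Nat.card_Icc]; simp
        calc (((Finset.Icc 1 M).filter (fun b : ℕ => (b:ℝ) ≤ B)).card : ℝ) * y
            ≤ (⌊B⌋₊:ℝ) * y := by
              apply mul_le_mul_of_nonneg_right _ (le_of_lt hy)
              exact_mod_cast hc
        _ ≤ B * y := mul_le_mul_of_nonneg_right (Nat.floor_le (le_of_lt hB)) (le_of_lt hy)
        _ = y * B := mul_comm _ _
      have h2 : ∑ b ∈ (Finset.Icc 1 M).filter (fun b : ℕ => ¬ (b:ℝ) ≤ B),
          (if (b:ℝ) ≤ B then y else X / (b:ℝ)^2) ≤ X * (2 / ((⌊B⌋₊:ℝ) + 1)) := by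
        rw [Finset.sum_congr rfl (fun b hb => if_neg (Finset.mem_filter.mp hb).2)]
        have hsub : (Finset.Icc 1 M).filter (fun b : ℕ => ¬ (b:ℝ) ≤ B) ⊆
            Finset.Icc (⌊B⌋₊ + 1) M := by
          intro b hb
          simp only [Finset.mem_filter, Finset.mem_Icc, not_le] at hb ⊢
          refine ⟨?_, hb.1.2⟩
          have hlt : ⌊B⌋₊ < b := by
            by_contra hcon
            push_neg at hcon
            have h3 : (b:ℝ) ≤ (⌊B⌋₊:ℝ) := by exact_mod_cast hcon
            have h4 := Nat.floor_le (le_of_lt hB)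
            linarith [hb.2]
          omega
        calc ∑ b ∈ (Finset.Icc 1 M).filter (fun b : ℕ => ¬ (b:ℝ) ≤ B), X / (b:ℝ)^2
            ≤ ∑ b ∈ Finset.Icc (⌊B⌋₊ + 1) M, X / (b:ℝ)^2 := by
              apply Finset.sum_le_sum_of_subset_of_nonneg hsub
              intro b _ _
              positivity
        _ = X * ∑ b ∈ Finset.Icc (⌊B⌋₊ + 1) M, 1 / (b:ℝ)^2 := by
              rw [Finset.mul_sum]
              apply Finset.sum_congr rfl
              intro b _
              ring
        _ ≤ X * (2 / ((⌊B⌋₊:ℝ) + 1)) := by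
              apply mul_le_mul_of_nonneg_left _ (le_of_lt hXpos)
              calc ∑ b ∈ Finset.Icc (⌊B⌋₊ + 1) M, 1 / (b:ℝ)^2
                  ≤ 2 / ((⌊B⌋₊ + 1 : ℕ):ℝ) := sum_Icc_inv_sq (⌊B⌋₊ + 1) M (by omega)
              _ = 2 / ((⌊B⌋₊:ℝ) + 1) := by push_cast; ring
      linarith
    have hyB : y * B = Real.sqrt (X * y) := by
      rw [hBdef, ← Real.sqrt_sq (le_of_lt hy), ← Real.sqrt_mul (sq_nonneg y)]
      congr 1
      field_simp
      rw [Real.sq_sqrt (sq_nonneg y)]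
    have hXB : X * (2 / ((⌊B⌋₊:ℝ) + 1)) ≤ 2 * Real.sqrt (X * y) := by
      have hfl : B ≤ (⌊B⌋₊:ℝ) + 1 := le_of_lt (Nat.lt_floor_add_one B)
      have hXB2 : X / B = Real.sqrt (X * y) := by
        rw [div_eq_iff (ne_of_gt hB), hBdef, ← Real.sqrt_mul (by positivity),
          show X * y * (X/y) = X^2 by field_simp, Real.sqrt_sq (le_of_lt hXpos)]
      calc X * (2 / ((⌊B⌋₊:ℝ) + 1)) ≤ X * (2 / B) := by
            apply mul_le_mul_of_nonneg_left _ (le_of_lt hXpos)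
            apply div_le_div_of_nonneg_left (by norm_num) hB hfl
      _ = 2 * (X / B) := by ring
      _ = 2 * Real.sqrt (X * y) := by rw [hXB2]
    calc (((Finset.Icc 1 M).filter fun n => (rad n : ℝ) < y).card : ℝ)
        ≤ (T.card : ℝ) := by exact_mod_cast hcard1
    _ ≤ y * B + X * (2 / ((⌊B⌋₊:ℝ) + 1)) := le_trans hsum hsplit
    _ ≤ Real.sqrt (X*y) + 2 * Real.sqrt (X*y) := by rw [hyB]; linarith
    _ = 3 * Real.sqrt (X*y) := by ring
  · have h1 : Real.sqrt (X * X) ≤ Real.sqrt (X * y) :=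
      Real.sqrt_le_sqrt (by nlinarith)
    have h2 : (0:ℝ) ≤ Real.sqrt (X * y) := Real.sqrt_nonneg _
    calc (((Finset.Icc 1 M).filter fun n => (rad n : ℝ) < y).card : ℝ)
        ≤ ((Finset.Icc 1 M).card : ℝ) := by
          exact_mod_cast Finset.card_le_card (Finset.filter_subset _ _)
    _ = (M:ℝ) := by rw [Nat.card_Icc]; simp
    _ ≤ X := hMX
    _ = Real.sqrt (X * X) := (Real.sqrt_mul_self (le_of_lt hXpos)).symm
    _ ≤ 3 * Real.sqrt (X * y) := by linarith

lemma multiples_card (M g : ℕ) (hg : 1 ≤ g) :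
    ((Finset.Icc 1 M).filter (fun m => g ∣ m)).card ≤ M / g := by
  have h : ((Finset.Icc 1 M).filter (fun m => g ∣ m)).card ≤ (Finset.Icc 1 (M/g)).card := by
    apply Finset.card_le_card_of_injOn (fun m => m / g)
    · intro m hm
      simp only [Finset.mem_coe, Finset.mem_filter, Finset.mem_Icc] at hm ⊢
      obtain ⟨⟨h1, h2⟩, hdvd⟩ := hm
      constructor
      · rw [Nat.one_le_div_iff (by omega)]
        exact Nat.le_of_dvd (by omega) hdvd
      · exact Nat.div_le_div_right h2
    · intro m hm n hn hmn
      simp only [Finset.coe_filter, Set.mem_setOf_eq, Finset.mem_Icc] at hm hn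
      have e1 : g * (m / g) = m := Nat.mul_div_cancel' hm.2
      have e2 : g * (n / g) = n := Nat.mul_div_cancel' hn.2
      have hmn' : m / g = n / g := hmn
      rw [← e1, ← e2, hmn']
  simpa using h

lemma countG (X Z : ℝ) (hX : 1 ≤ X) (hZ : 1 ≤ Z) :
    (((Finset.Icc 1 ⌊X⌋₊ ×ˢ Finset.Icc 1 ⌊X⌋₊).filter
       (fun p : ℕ × ℕ => Z < (Nat.gcd p.1 p.2 : ℝ))).card : ℝ) ≤ 2 * X^2 / Z := by
  set M := ⌊X⌋₊ with hM
  have hXpos : (0:ℝ) < X := by linarith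
  have hZpos : (0:ℝ) < Z := by linarith
  have hMX : (M:ℝ) ≤ X := Nat.floor_le (le_of_lt hXpos)
  set mult : ℕ → Finset ℕ := fun g => (Finset.Icc 1 M).filter (fun m => g ∣ m) with hmult
  have hsub : (Finset.Icc 1 M ×ˢ Finset.Icc 1 M).filter
      (fun p : ℕ × ℕ => Z < (Nat.gcd p.1 p.2 : ℝ)) ⊆
      ((Finset.Icc 1 M).filter (fun g : ℕ => Z < (g:ℝ))).biUnion
        (fun g => mult g ×ˢ mult g) := by
    intro p hp
    simp only [Finset.mem_filter, Finset.mem_product, Finset.mem_Icc] at hp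
    obtain ⟨⟨⟨h11, h12⟩, h21, h22⟩, hgcd⟩ := hp
    rw [Finset.mem_biUnion]
    refine ⟨Nat.gcd p.1 p.2, ?_, ?_⟩
    · simp only [Finset.mem_filter, Finset.mem_Icc]
      have hgpos : 1 ≤ Nat.gcd p.1 p.2 := Nat.gcd_pos_of_pos_left _ (by omega)
      exact ⟨⟨hgpos, le_trans (Nat.le_of_dvd (by omega) (Nat.gcd_dvd_left _ _)) h12⟩, hgcd⟩
    · simp only [hmult, Finset.mem_product, Finset.mem_filter, Finset.mem_Icc]
      exact ⟨⟨⟨h11, h12⟩, Nat.gcd_dvd_left _ _⟩, ⟨⟨h21, h22⟩, Nat.gcd_dvd_right _ _⟩⟩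
  have hcard := Finset.card_le_card hsub
  have hbi := Finset.card_biUnion_le (s := (Finset.Icc 1 M).filter (fun g : ℕ => Z < (g:ℝ)))
      (t := fun g => mult g ×ˢ mult g)
  have hterm : ∀ g ∈ (Finset.Icc 1 M).filter (fun g : ℕ => Z < (g:ℝ)),
      ((mult g ×ˢ mult g).card : ℝ) ≤ X^2 / (g:ℝ)^2 := by
    intro g hg
    simp only [Finset.mem_filter, Finset.mem_Icc] at hg
    have hg1 : 1 ≤ g := hg.1.1
    have hgR : (0:ℝ) < (g:ℝ) := by exact_mod_cast hg1
    rw [Finset.card_product]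
    have h1 : ((mult g).card : ℝ) ≤ X / g := by
      calc ((mult g).card : ℝ) ≤ ((M / g : ℕ) : ℝ) := by exact_mod_cast multiples_card M g hg1
      _ ≤ (M:ℝ) / (g:ℝ) := Nat.cast_div_le
      _ ≤ X / g := by gcongr
    calc (((mult g).card * (mult g).card : ℕ) : ℝ)
        = ((mult g).card : ℝ) * ((mult g).card : ℝ) := by push_cast; ring
    _ ≤ (X/g) * (X/g) := by
        apply mul_le_mul h1 h1 (by positivity) (by positivity)
    _ = X^2 / (g:ℝ)^2 := by field_simp
  set k := ⌊Z⌋₊ + 1 with hk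
  have hfilter_sub : (Finset.Icc 1 M).filter (fun g : ℕ => Z < (g:ℝ)) ⊆ Finset.Icc k M := by
    intro g hg
    simp only [Finset.mem_filter, Finset.mem_Icc] at hg ⊢
    refine ⟨?_, hg.1.2⟩
    have : ⌊Z⌋₊ < g := by
      by_contra hcon
      push_neg at hcon
      have h3 : (g:ℝ) ≤ (⌊Z⌋₊:ℝ) := by exact_mod_cast hcon
      have h4 := Nat.floor_le (le_of_lt hZpos)
      linarith [hg.2]
    omega
  have hsum : ∑ g ∈ (Finset.Icc 1 M).filter (fun g : ℕ => Z < (g:ℝ)), X^2 / (g:ℝ)^2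
      ≤ 2 * X^2 / Z := by
    calc ∑ g ∈ (Finset.Icc 1 M).filter (fun g : ℕ => Z < (g:ℝ)), X^2 / (g:ℝ)^2
        ≤ ∑ g ∈ Finset.Icc k M, X^2 / (g:ℝ)^2 := by
          apply Finset.sum_le_sum_of_subset_of_nonneg hfilter_sub
          intro g _ _
          positivity
    _ = X^2 * ∑ g ∈ Finset.Icc k M, 1 / (g:ℝ)^2 := by
          rw [Finset.mul_sum]; apply Finset.sum_congr rfl; intro g _; ring
    _ ≤ X^2 * (2 / (k:ℝ)) := by
          apply mul_le_mul_of_nonneg_left (sum_Icc_inv_sq k M (by omega)) (by positivity)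
    _ ≤ X^2 * (2 / Z) := by
          apply mul_le_mul_of_nonneg_left _ (by positivity)
          apply div_le_div_of_nonneg_left (by norm_num) hZpos
          have : Z < (k:ℝ) := by
            rw [hk]
            push_cast
            exact Nat.lt_floor_add_one Z
          linarith
    _ = 2 * X^2 / Z := by ring
  calc (((Finset.Icc 1 M ×ˢ Finset.Icc 1 M).filter
       (fun p : ℕ × ℕ => Z < (Nat.gcd p.1 p.2 : ℝ))).card : ℝ)
      ≤ ((((Finset.Icc 1 M).filter (fun g : ℕ => Z < (g:ℝ))).biUnion
        (fun g => mult g ×ˢ mult g)).card : ℝ) := by exact_mod_cast hcard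
  _ ≤ (∑ g ∈ (Finset.Icc 1 M).filter (fun g : ℕ => Z < (g:ℝ)), ((mult g ×ˢ mult g).card) : ℕ) := by
        exact_mod_cast hbi
  _ ≤ ∑ g ∈ (Finset.Icc 1 M).filter (fun g : ℕ => Z < (g:ℝ)), X^2 / (g:ℝ)^2 := by
        push_cast
        exact Finset.sum_le_sum hterm
  _ ≤ 2 * X^2 / Z := hsum

lemma countCoprime (M : ℕ) :
    (M:ℝ)^2 / 12 ≤
    (((Finset.Icc 1 M ×ˢ Finset.Icc 1 M).filter
      (fun p : ℕ × ℕ => Nat.gcd p.1 p.2 = 1)).card : ℝ) := by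
  set P := Finset.Icc 1 M ×ˢ Finset.Icc 1 M with hP
  have htotal : P.card = M^2 := by
    rw [hP, Finset.card_product, Nat.card_Icc]
    simp [sq]
  set mult : ℕ → Finset ℕ := fun g => (Finset.Icc 1 M).filter (fun m => g ∣ m) with hmult
  have hbad : (P.filter (fun p : ℕ × ℕ => ¬ Nat.gcd p.1 p.2 = 1)).card ≤
      ((Finset.Icc 2 M).biUnion (fun g => mult g ×ˢ mult g)).card := by
    apply Finset.card_le_card
    intro p hp
    simp only [hP, Finset.mem_filter, Finset.mem_product, Finset.mem_Icc] at hp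
    obtain ⟨⟨⟨h11, h12⟩, h21, h22⟩, hne⟩ := hp
    rw [Finset.mem_biUnion]
    have hgpos : 1 ≤ Nat.gcd p.1 p.2 := Nat.gcd_pos_of_pos_left _ (by omega)
    refine ⟨Nat.gcd p.1 p.2, ?_, ?_⟩
    · simp only [Finset.mem_Icc]
      exact ⟨by omega, le_trans (Nat.le_of_dvd (by omega) (Nat.gcd_dvd_left _ _)) h12⟩
    · simp only [hmult, Finset.mem_product, Finset.mem_filter, Finset.mem_Icc]
      exact ⟨⟨⟨h11, h12⟩, Nat.gcd_dvd_left _ _⟩, ⟨⟨h21, h22⟩, Nat.gcd_dvd_right _ _⟩⟩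
  have hbadsum : (((Finset.Icc 2 M).biUnion (fun g => mult g ×ˢ mult g)).card : ℝ)
      ≤ (11/12) * (M:ℝ)^2 := by
    have hbi := Finset.card_biUnion_le (s := Finset.Icc 2 M) (t := fun g => mult g ×ˢ mult g)
    have hterm : ∀ g ∈ Finset.Icc 2 M, ((mult g ×ˢ mult g).card : ℝ) ≤ (M:ℝ)^2 / (g:ℝ)^2 := by
      intro g hg
      simp only [Finset.mem_Icc] at hg
      have hg1 : 1 ≤ g := by omega
      have hgR : (0:ℝ) < (g:ℝ) := by exact_mod_cast hg1
      rw [Finset.card_product]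
      have h1 : ((mult g).card : ℝ) ≤ (M:ℝ) / g := by
        calc ((mult g).card : ℝ) ≤ ((M / g : ℕ) : ℝ) := by exact_mod_cast multiples_card M g hg1
        _ ≤ (M:ℝ) / (g:ℝ) := Nat.cast_div_le
      calc (((mult g).card * (mult g).card : ℕ) : ℝ)
          = ((mult g).card : ℝ) * ((mult g).card : ℝ) := by push_cast; ring
      _ ≤ ((M:ℝ)/g) * ((M:ℝ)/g) := mul_le_mul h1 h1 (by positivity) (by positivity)
      _ = (M:ℝ)^2 / (g:ℝ)^2 := by field_simp
    have hsum2 : ∑ g ∈ Finset.Icc 2 M, (M:ℝ)^2 / (g:ℝ)^2 ≤ (11/12) * (M:ℝ)^2 := by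
      have hsplit : Finset.Icc 2 M ⊆ insert 2 (Finset.Icc 3 M) := by
        intro g hg
        simp only [Finset.mem_Icc] at hg
        simp only [Finset.mem_insert, Finset.mem_Icc]
        omega
      calc ∑ g ∈ Finset.Icc 2 M, (M:ℝ)^2 / (g:ℝ)^2
          ≤ ∑ g ∈ insert 2 (Finset.Icc 3 M), (M:ℝ)^2 / (g:ℝ)^2 := by
            apply Finset.sum_le_sum_of_subset_of_nonneg hsplit
            intro g _ _
            positivity
      _ = (M:ℝ)^2/4 + ∑ g ∈ Finset.Icc 3 M, (M:ℝ)^2 / (g:ℝ)^2 := by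
            rw [Finset.sum_insert (by simp)]
            norm_num
      _ ≤ (M:ℝ)^2/4 + (M:ℝ)^2 * (2/3) := by
            have he : ∑ g ∈ Finset.Icc 3 M, (M:ℝ)^2 / (g:ℝ)^2
                = (M:ℝ)^2 * ∑ g ∈ Finset.Icc 3 M, 1 / (g:ℝ)^2 := by
              rw [Finset.mul_sum]; apply Finset.sum_congr rfl; intro g _; ring
            rw [he]
            have h3 := sum_Icc_inv_sq 3 M (by omega)
            have h4 : ∑ g ∈ Finset.Icc 3 M, 1 / (g:ℝ)^2 ≤ 2/3 := by
              refine le_trans h3 ?_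
              norm_num
            nlinarith [sq_nonneg (M:ℝ)]
      _ ≤ (11/12) * (M:ℝ)^2 := by nlinarith [sq_nonneg (M:ℝ)]
    calc (((Finset.Icc 2 M).biUnion (fun g => mult g ×ˢ mult g)).card : ℝ)
        ≤ (∑ g ∈ Finset.Icc 2 M, ((mult g ×ˢ mult g).card) : ℕ) := by exact_mod_cast hbi
    _ ≤ ∑ g ∈ Finset.Icc 2 M, (M:ℝ)^2 / (g:ℝ)^2 := by
          push_cast
          exact Finset.sum_le_sum hterm
    _ ≤ (11/12) * (M:ℝ)^2 := hsum2
  have hpart := Finset.card_filter_add_card_filter_not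
    (s := P) (p := fun p : ℕ × ℕ => Nat.gcd p.1 p.2 = 1)
  have hsplit2 : ((P.filter (fun p : ℕ × ℕ => Nat.gcd p.1 p.2 = 1)).card : ℝ)
      = (M:ℝ)^2 - ((P.filter (fun p : ℕ × ℕ => ¬ Nat.gcd p.1 p.2 = 1)).card : ℝ) := by
    have hc : ((P.filter (fun p : ℕ × ℕ => Nat.gcd p.1 p.2 = 1)).card : ℝ)
        + ((P.filter (fun p : ℕ × ℕ => ¬ Nat.gcd p.1 p.2 = 1)).card : ℝ) = ((M^2 : ℕ) : ℝ) := by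
      rw [← htotal]
      exact_mod_cast congrArg (fun n : ℕ => (n:ℝ)) hpart
    push_cast at hc
    linarith
  rw [hsplit2]
  have hb2 : ((P.filter (fun p : ℕ × ℕ => ¬ Nat.gcd p.1 p.2 = 1)).card : ℝ) ≤ (11/12) * (M:ℝ)^2 :=
    le_trans (by exact_mod_cast hbad) hbadsum
  linarith

/-- the basic height-bounded set of rationals -/
def hset (X : ℝ) : Set ℚ := {q : ℚ | (|q.num| : ℝ) ≤ X ∧ (q.den : ℝ) ≤ X}

lemma hset_mem_num {X : ℝ} {q : ℚ} (h : q ∈ hset X) :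
    q.num ∈ Finset.Icc (-(⌊X⌋₊:ℤ)) (⌊X⌋₊:ℤ) := by
  obtain ⟨h1, h2⟩ := h
  have habs : (q.num.natAbs : ℝ) ≤ X := by
    rw [Nat.cast_natAbs]
    push_cast
    exact h1
  have hle : q.num.natAbs ≤ ⌊X⌋₊ := Nat.le_floor habs
  have h3 : |q.num| ≤ (⌊X⌋₊:ℤ) := by
    rw [Int.abs_eq_natAbs]
    exact_mod_cast hle
  simp only [Finset.mem_Icc]
  exact abs_le.mp h3

lemma hset_mem_den {X : ℝ} {q : ℚ} (h : q ∈ hset X) : q.den ∈ Finset.Icc 1 ⌊X⌋₊ := by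
  simp only [Finset.mem_Icc]
  exact ⟨q.pos, Nat.le_floor h.2⟩

lemma hset_finite (X : ℝ) (hX : 0 ≤ X) : (hset X).Finite := by
  apply Set.Finite.subset (Set.Finite.image
    (f := fun p : ℤ × ℕ => ((p.1 : ℚ) / (p.2 : ℚ)))
    (Set.finite_mem_finset (Finset.Icc (-(⌊X⌋₊:ℤ)) (⌊X⌋₊:ℤ) ×ˢ Finset.Icc 1 ⌊X⌋₊)))
  intro q hq
  refine ⟨(q.num, q.den), ?_, ?_⟩
  · simp only [Finset.mem_coe, Finset.mem_product]
    exact ⟨hset_mem_num hq, hset_mem_den hq⟩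
  · simp only
    exact_mod_cast q.num_div_den

lemma hset_ncard_lower (X : ℝ) (hX : 2 ≤ X) : X^2 / 48 ≤ ((hset X).ncard : ℝ) := by
  set M := ⌊X⌋₊ with hM
  set P := (Finset.Icc 1 M ×ˢ Finset.Icc 1 M).filter
    (fun p : ℕ × ℕ => Nat.gcd p.1 p.2 = 1) with hPdef
  have hinj : P.card ≤ (hset X).ncard := by
    rw [← Set.ncard_coe_finset P]
    refine Set.ncard_le_ncard_of_injOn (fun p : ℕ × ℕ => ((p.1:ℚ) / (p.2:ℚ))) ?_ ?_
      (hset_finite X (by linarith))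
    · intro p hp
      simp only [hPdef, Finset.coe_filter, Set.mem_setOf_eq, Finset.mem_product,
        Finset.mem_Icc] at hp
      obtain ⟨⟨⟨h11, h12⟩, h21, h22⟩, hcop⟩ := hp
      have hb0 : (0:ℤ) < (p.2:ℤ) := by exact_mod_cast h21
      have hcop' : Nat.Coprime (p.1:ℤ).natAbs (p.2:ℤ).natAbs := by simpa using hcop
      have hnum : ((p.1:ℚ) / (p.2:ℚ)).num = (p.1:ℤ) := by
        have := Rat.num_div_eq_of_coprime hb0 hcop'
        push_cast at this ⊢
        exact_mod_cast this
      have hden : ((p.1:ℚ) / (p.2:ℚ)).den = p.2 := by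
        have := Rat.den_div_eq_of_coprime hb0 hcop'
        push_cast at this ⊢
        exact_mod_cast this
      constructor
      · rw [hnum]
        push_cast
        rw [abs_of_nonneg (by positivity)]
        calc ((p.1:ℕ):ℝ) ≤ (M:ℝ) := by exact_mod_cast h12
        _ ≤ X := Nat.floor_le (by linarith)
      · rw [hden]
        calc ((p.2:ℕ):ℝ) ≤ (M:ℝ) := by exact_mod_cast h22
        _ ≤ X := Nat.floor_le (by linarith)
    · intro p hp q hq hpq
      simp only [hPdef, Finset.coe_filter, Set.mem_setOf_eq, Finset.mem_product,
        Finset.mem_Icc] at hp hq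
      obtain ⟨⟨⟨h11, h12⟩, h21, h22⟩, hcop⟩ := hp
      obtain ⟨⟨⟨g11, g12⟩, g21, g22⟩, gcop⟩ := hq
      have hb0 : (0:ℤ) < (p.2:ℤ) := by exact_mod_cast h21
      have gb0 : (0:ℤ) < (q.2:ℤ) := by exact_mod_cast g21
      have hcop' : Nat.Coprime (p.1:ℤ).natAbs (p.2:ℤ).natAbs := by simpa using hcop
      have gcop' : Nat.Coprime (q.1:ℤ).natAbs (q.2:ℤ).natAbs := by simpa using gcop
      have hnum := Rat.num_div_eq_of_coprime hb0 hcop'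
      have gnum := Rat.num_div_eq_of_coprime gb0 gcop'
      have hden := Rat.den_div_eq_of_coprime hb0 hcop'
      have gden := Rat.den_div_eq_of_coprime gb0 gcop'
      have e1 : ((p.1:ℤ):ℚ) / ((p.2:ℤ):ℚ) = ((q.1:ℤ):ℚ) / ((q.2:ℤ):ℚ) := by
        push_cast at hpq ⊢
        exact hpq
      have enum : (p.1:ℤ) = (q.1:ℤ) := by rw [← hnum, ← gnum, e1]
      have eden : ((p.2:ℕ):ℤ) = ((q.2:ℕ):ℤ) := by rw [← hden, ← gden, e1]
      exact Prod.ext (by exact_mod_cast enum) (by exact_mod_cast eden)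
  have hcop := countCoprime M
  have hMX : X - 1 ≤ (M:ℝ) := le_of_lt (Nat.sub_one_lt_floor X)
  have hX2 : X / 2 ≤ (M:ℝ) := by linarith
  have hkey : X^2/48 ≤ (M:ℝ)^2/12 := by nlinarith
  calc X^2/48 ≤ (M:ℝ)^2/12 := hkey
  _ ≤ (P.card : ℝ) := hcop
  _ ≤ ((hset X).ncard : ℝ) := by exact_mod_cast hinj

lemma badR_ncard (X y : ℝ) (hX : 0 ≤ X) :
    (({q : ℚ | q ∈ hset X ∧ (rad q.den : ℝ) < y}).ncard : ℝ)
      ≤ (2*(⌊X⌋₊:ℝ)+1) *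
        (((Finset.Icc 1 ⌊X⌋₊).filter fun n => (rad n : ℝ) < y).card : ℝ) := by
  set M := ⌊X⌋₊ with hM
  set T2 := (Finset.Icc (-(M:ℤ)) (M:ℤ)) ×ˢ ((Finset.Icc 1 M).filter fun n => (rad n : ℝ) < y)
    with hT2
  have hle : ({q : ℚ | q ∈ hset X ∧ (rad q.den : ℝ) < y}).ncard ≤ T2.card := by
    rw [← Set.ncard_coe_finset T2]
    refine Set.ncard_le_ncard_of_injOn (fun q : ℚ => (q.num, q.den)) ?_ ?_
      (Set.finite_mem_finset T2)
    · intro q hq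
      obtain ⟨hq1, hq2⟩ := hq
      simp only [hT2, Finset.mem_coe, Finset.mem_product, Finset.mem_filter]
      exact ⟨hset_mem_num hq1, hset_mem_den hq1, hq2⟩
    · intro q hq r hr hqr
      have h1 : q.num = r.num := congrArg Prod.fst hqr
      have h2 : q.den = r.den := congrArg Prod.snd hqr
      exact Rat.ext h1 h2
  have hcardT2 : (T2.card : ℝ) = (2*(M:ℝ)+1) *
      (((Finset.Icc 1 M).filter fun n => (rad n : ℝ) < y).card : ℝ) := by
    rw [hT2, Finset.card_product]
    have hicc : (Finset.Icc (-(M:ℤ)) (M:ℤ)).card = 2*M+1 := by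
      rw [Int.card_Icc]
      omega
    rw [hicc]
    push_cast
    ring
  calc (({q : ℚ | q ∈ hset X ∧ (rad q.den : ℝ) < y}).ncard : ℝ) ≤ (T2.card : ℝ) := by
        exact_mod_cast hle
  _ = _ := hcardT2

lemma badP_ncard (X Z : ℝ) (hX : 0 ≤ X) :
    (({p : ℚ×ℚ | p.1 ∈ hset X ∧ p.2 ∈ hset X ∧ Z < (Nat.gcd p.1.den p.2.den : ℝ)}).ncard : ℝ)
      ≤ (2*(⌊X⌋₊:ℝ)+1)^2 *
        (((Finset.Icc 1 ⌊X⌋₊ ×ˢ Finset.Icc 1 ⌊X⌋₊).filter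
          (fun v : ℕ × ℕ => Z < (Nat.gcd v.1 v.2 : ℝ))).card : ℝ) := by
  set M := ⌊X⌋₊ with hM
  set Gfin := (Finset.Icc 1 M ×ˢ Finset.Icc 1 M).filter
    (fun v : ℕ × ℕ => Z < (Nat.gcd v.1 v.2 : ℝ)) with hGfin
  set T2 := ((Finset.Icc (-(M:ℤ)) (M:ℤ)) ×ˢ (Finset.Icc (-(M:ℤ)) (M:ℤ))) ×ˢ Gfin with hT2
  have hle : ({p : ℚ×ℚ | p.1 ∈ hset X ∧ p.2 ∈ hset X ∧
      Z < (Nat.gcd p.1.den p.2.den : ℝ)}).ncard ≤ T2.card := by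
    rw [← Set.ncard_coe_finset T2]
    refine Set.ncard_le_ncard_of_injOn
      (fun p : ℚ×ℚ => ((p.1.num, p.2.num), (p.1.den, p.2.den))) ?_ ?_
      (Set.finite_mem_finset T2)
    · intro p hp
      obtain ⟨hp1, hp2, hp3⟩ := hp
      simp only [hT2, hGfin, Finset.mem_coe, Finset.mem_product, Finset.mem_filter]
      exact ⟨⟨hset_mem_num hp1, hset_mem_num hp2⟩,
        ⟨hset_mem_den hp1, hset_mem_den hp2⟩, hp3⟩
    · intro p hp r hr hpr
      simp only [Prod.mk.injEq] at hpr
      obtain ⟨⟨e1, e2⟩, e3, e4⟩ := hpr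
      exact Prod.ext (Rat.ext e1 e3) (Rat.ext e2 e4)
  have hcardT2 : (T2.card : ℝ) = (2*(M:ℝ)+1)^2 * (Gfin.card : ℝ) := by
    rw [hT2, Finset.card_product, Finset.card_product]
    have hicc : (Finset.Icc (-(M:ℤ)) (M:ℤ)).card = 2*M+1 := by
      rw [Int.card_Icc]
      omega
    rw [hicc]
    push_cast
    ring
  calc (({p : ℚ×ℚ | p.1 ∈ hset X ∧ p.2 ∈ hset X ∧
      Z < (Nat.gcd p.1.den p.2.den : ℝ)}).ncard : ℝ) ≤ (T2.card : ℝ) := by exact_mod_cast hle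
  _ = _ := hcardT2

lemma ncard_biUnion_le {α ι : Type*} (s : Finset ι) (A : ι → Set α) :
    (⋃ i ∈ s, A i).ncard ≤ ∑ i ∈ s, (A i).ncard := by
  classical
  induction s using Finset.induction with
  | empty => simp
  | @insert x s hx ih =>
    rw [Finset.set_biUnion_insert, Finset.sum_insert hx]
    exact le_trans (Set.ncard_union_le _ _) (by linarith)

lemma ncard_prod {α β : Type*} (s : Set α) (t : Set β) :
    (s ×ˢ t).ncard = s.ncard * t.ncard := by
  rw [← Nat.card_coe_set_eq, ← Nat.card_coe_set_eq, ← Nat.card_coe_set_eq,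
    ← Nat.card_prod]
  exact Nat.card_congr (Equiv.Set.prod s t)

lemma ncard_pi {κ α : Type*} [Fintype κ] (T : Set α) :
    (Set.pi Set.univ (fun _ : κ => T)).ncard = T.ncard ^ Fintype.card κ := by
  rw [← Nat.card_coe_set_eq]
  rw [Nat.card_congr (Equiv.Set.univPi (fun _ : κ => T))]
  rw [Nat.card_pi]
  simp [Nat.card_coe_set_eq]

lemma card_ne_one {ι : Type*} [Fintype ι] [DecidableEq ι] (k : ι) :
    Fintype.card {i : ι // i ≠ k} = Fintype.card ι - 1 := by
  rw [Fintype.card_subtype]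
  have h : (Finset.univ.filter (fun i : ι => i ≠ k)) = Finset.univ \ {k} := by
    ext i; simp
  rw [h, Finset.card_sdiff_of_subset (by simp), Finset.card_singleton, Finset.card_univ]

lemma card_ne_two {ι : Type*} [Fintype ι] [DecidableEq ι] {k k' : ι} (h : k ≠ k') :
    Fintype.card {i : ι // i ≠ k ∧ i ≠ k'} = Fintype.card ι - 2 := by
  rw [Fintype.card_subtype]
  have h2 : (Finset.univ.filter (fun i : ι => i ≠ k ∧ i ≠ k')) = Finset.univ \ {k, k'} := by
    ext i; simp
  rw [h2, Finset.card_sdiff_of_subset (by simp)]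
  rw [Finset.card_insert_of_notMem (by simp [h]), Finset.card_singleton, Finset.card_univ]

lemma oneCoordBound {ι : Type*} [Fintype ι] [DecidableEq ι] (S R : Set ℚ)
    (hS : S.Finite) (hR : R.Finite) (k : ι) :
    ({f : ι → ℚ | (∀ i, f i ∈ S) ∧ f k ∈ R}).ncard
      ≤ R.ncard * S.ncard ^ (Fintype.card ι - 1) := by
  have hle : ({f : ι → ℚ | (∀ i, f i ∈ S) ∧ f k ∈ R}).ncard
      ≤ (R ×ˢ (Set.pi Set.univ (fun _ : {i : ι // i ≠ k} => S))).ncard := by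
    refine Set.ncard_le_ncard_of_injOn
      (fun f => (f k, fun i : {i : ι // i ≠ k} => f i.1)) ?_ ?_
      (hR.prod (Set.Finite.pi (fun _ => hS)))
    · rintro f ⟨hf1, hf2⟩
      exact ⟨hf2, fun i _ => hf1 i.1⟩
    · rintro f hf g hg hfg
      simp only [Prod.mk.injEq] at hfg
      funext i
      by_cases hik : i = k
      · rw [hik]; exact hfg.1
      · exact congrFun hfg.2 ⟨i, hik⟩
  calc _ ≤ _ := hle
  _ = R.ncard * S.ncard ^ (Fintype.card ι - 1) := by
      rw [ncard_prod, ncard_pi, card_ne_one]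

lemma twoCoordBound {ι : Type*} [Fintype ι] [DecidableEq ι] (S : Set ℚ) (P : Set (ℚ × ℚ))
    (hS : S.Finite) (hP : P.Finite) {k k' : ι} (hkk' : k ≠ k') :
    ({f : ι → ℚ | (∀ i, f i ∈ S) ∧ (f k, f k') ∈ P}).ncard
      ≤ P.ncard * S.ncard ^ (Fintype.card ι - 2) := by
  have hle : ({f : ι → ℚ | (∀ i, f i ∈ S) ∧ (f k, f k') ∈ P}).ncard
      ≤ (P ×ˢ (Set.pi Set.univ (fun _ : {i : ι // i ≠ k ∧ i ≠ k'} => S))).ncard := by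
    refine Set.ncard_le_ncard_of_injOn
      (fun f => ((f k, f k'), fun i : {i : ι // i ≠ k ∧ i ≠ k'} => f i.1)) ?_ ?_
      (hP.prod (Set.Finite.pi (fun _ => hS)))
    · rintro f ⟨hf1, hf2⟩
      exact ⟨hf2, fun i _ => hf1 i.1⟩
    · rintro f hf g hg hfg
      simp only [Prod.mk.injEq] at hfg
      funext i
      by_cases hik : i = k
      · rw [hik]; exact hfg.1.1
      · by_cases hik' : i = k'
        · rw [hik']; exact hfg.1.2
        · exact congrFun hfg.2 ⟨i, hik, hik'⟩
  calc _ ≤ _ := hle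
  _ = P.ncard * S.ncard ^ (Fintype.card ι - 2) := by
      rw [ncard_prod, ncard_pi, card_ne_two hkk']

set_option maxHeartbeats 2000000 in
/-- the proportion of pairs of coefficient tuples (of a monic
centered polynomial and a monic polynomial, all coefficients of height ≤ log X)
that fail to be ε-ordinary is `O_ε(d² X^{-ε})`, stated as a counting bound. -/
theorem stmt19 (d : ℕ) (hd : 1 ≤ d) (ε : ℝ) (hε : 0 < ε) :
    ∃ C > (0 : ℝ), ∀ X : ℝ, 2 ≤ X →
      (({p : (Fin (d - 1) → ℚ) × (Fin d → ℚ) |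
          ((∀ i, (|(p.1 i).num| : ℝ) ≤ X ∧ ((p.1 i).den : ℝ) ≤ X) ∧
           (∀ j, (|(p.2 j).num| : ℝ) ≤ X ∧ ((p.2 j).den : ℝ) ≤ X)) ∧
          ¬ ((∀ k : Fin (d - 1) ⊕ Fin d,
                X ^ (1 - 2 * ε) ≤ (rad (Sum.elim p.1 p.2 k).den : ℝ)) ∧
             (∀ k k' : Fin (d - 1) ⊕ Fin d, k ≠ k' →
                ((Nat.gcd (Sum.elim p.1 p.2 k).den (Sum.elim p.1 p.2 k').den : ℕ) : ℝ)
                  ≤ X ^ (2 * ε)))}).ncard : ℝ) ≤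
        C * (d : ℝ) ^ 2 * X ^ (-ε) *
          (({p : (Fin (d - 1) → ℚ) × (Fin d → ℚ) |
              (∀ i, (|(p.1 i).num| : ℝ) ≤ X ∧ ((p.1 i).den : ℝ) ≤ X) ∧
              (∀ j, (|(p.2 j).num| : ℝ) ≤ X ∧ ((p.2 j).den : ℝ) ≤ X)}).ncard : ℝ) := by
  classical
  refine ⟨1000000, by norm_num, ?_⟩
  intro X hX
  have hX1 : (1:ℝ) ≤ X := by linarith
  have hX0 : (0:ℝ) < X := by linarith
  set y := X ^ (1 - 2 * ε) with hy
  set Z := X ^ (2 * ε) with hZdef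
  have hy0 : (0:ℝ) < y := Real.rpow_pos_of_pos hX0 _
  have hZ1 : (1:ℝ) ≤ Z := Real.one_le_rpow hX1 (by positivity)
  set S := hset X with hSdef
  have hSfin : S.Finite := hset_finite X (by linarith)
  set e := Equiv.sumArrowEquivProdArrow (Fin (d-1)) (Fin d) ℚ with he
  set Box' : Set ((Fin (d - 1) ⊕ Fin d) → ℚ) := {f | ∀ i, f i ∈ S} with hBox'
  set Bad' : Set ((Fin (d - 1) ⊕ Fin d) → ℚ) :=
    {f | (∀ i, f i ∈ S) ∧
      ¬ ((∀ k, y ≤ (rad (f k).den : ℝ)) ∧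
         (∀ k k', k ≠ k' → ((Nat.gcd (f k).den (f k').den : ℕ) : ℝ) ≤ Z))} with hBad'
  -- identify the two statement sets
  have hBoxEq : {p : (Fin (d - 1) → ℚ) × (Fin d → ℚ) |
      (∀ i, (|(p.1 i).num| : ℝ) ≤ X ∧ ((p.1 i).den : ℝ) ≤ X) ∧
      (∀ j, (|(p.2 j).num| : ℝ) ≤ X ∧ ((p.2 j).den : ℝ) ≤ X)} = e '' Box' := by
    rw [Equiv.image_eq_preimage_symm]
    ext p
    simp only [Set.mem_setOf_eq, Set.mem_preimage]
    constructor
    · rintro ⟨h1, h2⟩ i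
      cases i with
      | inl i => exact h1 i
      | inr j => exact h2 j
    · intro h
      exact ⟨fun i => h (Sum.inl i), fun j => h (Sum.inr j)⟩
  have hBadEq : {p : (Fin (d - 1) → ℚ) × (Fin d → ℚ) |
      ((∀ i, (|(p.1 i).num| : ℝ) ≤ X ∧ ((p.1 i).den : ℝ) ≤ X) ∧
       (∀ j, (|(p.2 j).num| : ℝ) ≤ X ∧ ((p.2 j).den : ℝ) ≤ X)) ∧
      ¬ ((∀ k : Fin (d - 1) ⊕ Fin d, y ≤ (rad (Sum.elim p.1 p.2 k).den : ℝ)) ∧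
         (∀ k k' : Fin (d - 1) ⊕ Fin d, k ≠ k' →
            ((Nat.gcd (Sum.elim p.1 p.2 k).den (Sum.elim p.1 p.2 k').den : ℕ) : ℝ) ≤ Z))}
      = e '' Bad' := by
    rw [Equiv.image_eq_preimage_symm]
    ext p
    simp only [Set.mem_setOf_eq, Set.mem_preimage, hBad']
    constructor
    · rintro ⟨⟨h1, h2⟩, h3⟩
      refine ⟨?_, h3⟩
      intro i
      cases i with
      | inl i => exact h1 i
      | inr j => exact h2 j
    · rintro ⟨h, h3⟩
      exact ⟨⟨fun i => h (Sum.inl i), fun j => h (Sum.inr j)⟩, h3⟩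
  have hBox'pi : Box' = Set.pi Set.univ (fun _ : Fin (d-1) ⊕ Fin d => S) := by
    ext f
    simp [hBox', Set.mem_pi]
  set N := S.ncard with hNdef
  set m := Fintype.card (Fin (d-1) ⊕ Fin d) with hm
  have hmval : m = (d-1) + d := by simp [hm]
  have hm1 : 1 ≤ m := by omega
  -- bad sets of rationals
  set badR : Set ℚ := {q : ℚ | q ∈ hset X ∧ (rad q.den : ℝ) < y} with hbadR
  set badP : Set (ℚ×ℚ) :=
    {v : ℚ×ℚ | v.1 ∈ hset X ∧ v.2 ∈ hset X ∧ Z < (Nat.gcd v.1.den v.2.den : ℝ)} with hbadP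
  have hbadRfin : badR.Finite := hSfin.subset (fun q hq => hq.1)
  have hbadPfin : badP.Finite := (hSfin.prod hSfin).subset (fun v hv => ⟨hv.1, hv.2.1⟩)
  set A : (Fin (d-1) ⊕ Fin d) → Set ((Fin (d-1) ⊕ Fin d) → ℚ) :=
    fun k => {f | (∀ i, f i ∈ S) ∧ f k ∈ badR} with hA
  set B : ((Fin (d-1) ⊕ Fin d) × (Fin (d-1) ⊕ Fin d)) → Set ((Fin (d-1) ⊕ Fin d) → ℚ) :=
    fun q => {f | (∀ i, f i ∈ S) ∧ q.1 ≠ q.2 ∧ (f q.1, f q.2) ∈ badP} with hB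
  have hBadSub : Bad' ⊆ (⋃ k ∈ (Finset.univ : Finset (Fin (d-1) ⊕ Fin d)), A k)
      ∪ (⋃ q ∈ (Finset.univ : Finset ((Fin (d-1) ⊕ Fin d) × (Fin (d-1) ⊕ Fin d))), B q) := by
    rintro f ⟨h1, h2⟩
    rcases not_and_or.mp h2 with h | h
    · push_neg at h
      obtain ⟨k, hk⟩ := h
      left
      exact Set.mem_biUnion (Finset.mem_coe.mpr (Finset.mem_univ k)) ⟨h1, h1 k, hk⟩
    · push_neg at h
      obtain ⟨k, k', hne, hgt⟩ := h
      right
      exact Set.mem_biUnion (Finset.mem_coe.mpr (Finset.mem_univ (k, k')))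
        ⟨h1, hne, h1 k, h1 k', hgt⟩
  have hAfin : ∀ k, (A k).Finite := by
    intro k
    apply (Set.Finite.pi (fun _ : Fin (d-1) ⊕ Fin d => hSfin)).subset
    intro f hf
    simp only [Set.mem_pi, Set.mem_univ, forall_true_left]
    exact fun i => hf.1 i
  have hBfin : ∀ q, (B q).Finite := by
    intro q
    apply (Set.Finite.pi (fun _ : Fin (d-1) ⊕ Fin d => hSfin)).subset
    intro f hf
    simp only [Set.mem_pi, Set.mem_univ, forall_true_left]
    exact fun i => hf.1 i
  have hUfin : ((⋃ k ∈ (Finset.univ : Finset (Fin (d-1) ⊕ Fin d)), A k)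
      ∪ (⋃ q ∈ (Finset.univ : Finset ((Fin (d-1) ⊕ Fin d) × (Fin (d-1) ⊕ Fin d))), B q)).Finite := by
    apply Set.Finite.union
    · exact Set.Finite.biUnion (Finset.finite_toSet _) (fun k _ => hAfin k)
    · exact Set.Finite.biUnion (Finset.finite_toSet _) (fun q _ => hBfin q)
  have hcard_le : Bad'.ncard ≤
      (∑ k ∈ (Finset.univ : Finset (Fin (d-1) ⊕ Fin d)), (A k).ncard)
      + (∑ q ∈ (Finset.univ : Finset ((Fin (d-1) ⊕ Fin d) × (Fin (d-1) ⊕ Fin d))), (B q).ncard) := by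
    calc Bad'.ncard ≤ _ := Set.ncard_le_ncard hBadSub hUfin
    _ ≤ _ := Set.ncard_union_le _ _
    _ ≤ _ := add_le_add (ncard_biUnion_le _ _) (ncard_biUnion_le _ _)
  have hAk : ∀ k, (A k).ncard ≤ badR.ncard * N ^ (m - 1) := by
    intro k
    exact oneCoordBound S badR hSfin hbadRfin k
  have hBq : ∀ q, (B q).ncard ≤ badP.ncard * N ^ (m - 2) := by
    intro q
    by_cases hq : q.1 = q.2
    · have hempty : B q = ∅ := by
        ext f
        simp [hB, hq]
      rw [hempty]
      simp
    · have heq : B q = {f : (Fin (d-1) ⊕ Fin d) → ℚ | (∀ i, f i ∈ S) ∧ (f q.1, f q.2) ∈ badP} := by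
        ext f
        simp [hB, hq]
      rw [heq]
      exact twoCoordBound S badP hSfin hbadPfin hq
  have hsumA : (∑ k ∈ (Finset.univ : Finset (Fin (d-1) ⊕ Fin d)), (A k).ncard)
      ≤ m * (badR.ncard * N ^ (m - 1)) := by
    calc _ ≤ (Finset.univ : Finset (Fin (d-1) ⊕ Fin d)).card • (badR.ncard * N ^ (m - 1)) :=
          Finset.sum_le_card_nsmul _ _ _ (fun k _ => hAk k)
    _ = m * (badR.ncard * N ^ (m - 1)) := by rw [Finset.card_univ, smul_eq_mul, hm]
  have hsumB : (∑ q ∈ (Finset.univ : Finset ((Fin (d-1) ⊕ Fin d) × (Fin (d-1) ⊕ Fin d))),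
      (B q).ncard) ≤ (m * m) * (badP.ncard * N ^ (m - 2)) := by
    calc _ ≤ (Finset.univ : Finset ((Fin (d-1) ⊕ Fin d) × (Fin (d-1) ⊕ Fin d))).card
          • (badP.ncard * N ^ (m - 2)) :=
          Finset.sum_le_card_nsmul _ _ _ (fun q _ => hBq q)
    _ = (m * m) * (badP.ncard * N ^ (m - 2)) := by
        rw [Finset.card_univ, smul_eq_mul, Fintype.card_prod, hm]
  have hsumB0 : m = 1 → (∑ q ∈ (Finset.univ : Finset ((Fin (d-1) ⊕ Fin d) × (Fin (d-1) ⊕ Fin d))),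
      (B q).ncard) = 0 := by
    intro hm1'
    apply Finset.sum_eq_zero
    intro q _
    have hsub : Subsingleton (Fin (d-1) ⊕ Fin d) := by
      rw [← Fintype.card_le_one_iff_subsingleton, ← hm, hm1']
    have hq : q.1 = q.2 := Subsingleton.elim _ _
    have hempty : B q = ∅ := by
      ext f
      simp [hB, hq]
    rw [hempty]
    simp
  -- real-number estimates
  have hNlow : X^2 / 48 ≤ (N:ℝ) := hset_ncard_lower X hX
  have hNnn : (0:ℝ) ≤ (N:ℝ) := Nat.cast_nonneg _
  have hMle : (⌊X⌋₊:ℝ) ≤ X := Nat.floor_le (le_of_lt hX0)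
  have hM3X : (2*(⌊X⌋₊:ℝ)+1) ≤ 3*X := by linarith
  have hXeps_pos : (0:ℝ) < X ^ (-ε) := Real.rpow_pos_of_pos hX0 _
  have hXeps1 : X ^ (-ε) ≤ 1 := Real.rpow_le_one_of_one_le_of_nonpos hX1 (by linarith)
  have hsqrt : Real.sqrt (X * y) = X ^ (1 - ε) := by
    have e1 : X * y = X ^ ((2:ℝ) - 2*ε) := by
      rw [hy]
      calc X * X ^ (1 - 2*ε) = X ^ (1:ℝ) * X ^ (1 - 2*ε) := by rw [Real.rpow_one]
      _ = X ^ ((1:ℝ) + (1 - 2*ε)) := (Real.rpow_add hX0 _ _).symm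
      _ = X ^ ((2:ℝ) - 2*ε) := by ring_nf
    have e2 : X ^ ((2:ℝ) - 2*ε) = (X ^ ((1:ℝ) - ε))^2 := by
      rw [← Real.rpow_natCast (X ^ ((1:ℝ) - ε)) 2, ← Real.rpow_mul (le_of_lt hX0)]
      norm_num
      ring_nf
    rw [e1, e2, Real.sqrt_sq (Real.rpow_nonneg (le_of_lt hX0) _)]
  have hXXe : X * X ^ ((1:ℝ) - ε) = X^2 * X ^ (-ε) := by
    calc X * X ^ ((1:ℝ) - ε) = X ^ (1:ℝ) * X ^ ((1:ℝ) - ε) := by rw [Real.rpow_one]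
    _ = X ^ ((1:ℝ) + ((1:ℝ) - ε)) := (Real.rpow_add hX0 _ _).symm
    _ = X ^ ((2:ℝ) + (-ε)) := by ring_nf
    _ = X ^ (2:ℝ) * X ^ (-ε) := Real.rpow_add hX0 _ _
    _ = X^2 * X ^ (-ε) := by
        rw [show (2:ℝ) = ((2:ℕ):ℝ) by norm_num, Real.rpow_natCast]
  have hn1 : (badR.ncard : ℝ) ≤ 432 * (X ^ (-ε)) * (N:ℝ) := by
    have step1 := badR_ncard X y (by linarith)
    have step2 := countD X y hX1 hy0
    have hDnn : (0:ℝ) ≤ (((Finset.Icc 1 ⌊X⌋₊).filter fun n => (rad n : ℝ) < y).card : ℝ) :=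
      Nat.cast_nonneg _
    have hstep : (badR.ncard : ℝ) ≤ 3*X * (3 * Real.sqrt (X*y)) := by
      calc (badR.ncard : ℝ) ≤ (2*(⌊X⌋₊:ℝ)+1) *
          (((Finset.Icc 1 ⌊X⌋₊).filter fun n => (rad n : ℝ) < y).card : ℝ) := step1
      _ ≤ (3*X) * (3 * Real.sqrt (X*y)) := by
          apply mul_le_mul hM3X step2 hDnn (by linarith)
    rw [hsqrt] at hstep
    have : (3*X) * (3 * X ^ ((1:ℝ) - ε)) = 9 * (X^2 * X ^ (-ε)) := by
      rw [← hXXe]; ring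
    rw [this] at hstep
    calc (badR.ncard : ℝ) ≤ 9 * (X^2 * X ^ (-ε)) := hstep
    _ ≤ 9 * ((48 * (N:ℝ)) * X ^ (-ε)) := by
        apply mul_le_mul_of_nonneg_left _ (by norm_num)
        apply mul_le_mul_of_nonneg_right _ (le_of_lt hXeps_pos)
        linarith
    _ = 432 * (X ^ (-ε)) * (N:ℝ) := by ring
  have hn2 : (badP.ncard : ℝ) ≤ 41472 * (X ^ (-ε)) * (N:ℝ)^2 := by
    have step1 := badP_ncard X Z (by linarith)
    have step2 := countG X Z hX1 hZ1
    have hGnn : (0:ℝ) ≤ (((Finset.Icc 1 ⌊X⌋₊ ×ˢ Finset.Icc 1 ⌊X⌋₊).filter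
        (fun v : ℕ × ℕ => Z < (Nat.gcd v.1 v.2 : ℝ))).card : ℝ) := Nat.cast_nonneg _
    have hZpos : (0:ℝ) < Z := by linarith
    have hstep : (badP.ncard : ℝ) ≤ (3*X)^2 * (2 * X^2 / Z) := by
      calc (badP.ncard : ℝ) ≤ (2*(⌊X⌋₊:ℝ)+1)^2 * (((Finset.Icc 1 ⌊X⌋₊ ×ˢ Finset.Icc 1 ⌊X⌋₊).filter
          (fun v : ℕ × ℕ => Z < (Nat.gcd v.1 v.2 : ℝ))).card : ℝ) := step1
      _ ≤ (3*X)^2 * (2 * X^2 / Z) := by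
          apply mul_le_mul _ step2 hGnn (by positivity)
          have h0 : (0:ℝ) ≤ 2*(⌊X⌋₊:ℝ)+1 := by positivity
          nlinarith
    have hZinv : (1:ℝ)/Z = X ^ (-(2*ε)) := by
      rw [hZdef, one_div, ← Real.rpow_neg (le_of_lt hX0)]
    have hZe : X ^ (-(2*ε)) ≤ X ^ (-ε) := Real.rpow_le_rpow_of_exponent_le hX1 (by linarith)
    have hX4 : X^2 * X^2 ≤ (48*(N:ℝ)) * (48*(N:ℝ)) := by
      have h2 : (0:ℝ) ≤ X^2 := sq_nonneg X
      nlinarith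
    calc (badP.ncard : ℝ) ≤ (3*X)^2 * (2 * X^2 / Z) := hstep
    _ = 18 * (X^2 * X^2) * (1/Z) := by ring
    _ = 18 * (X^2 * X^2) * X ^ (-(2*ε)) := by rw [hZinv]
    _ ≤ 18 * (X^2 * X^2) * X ^ (-ε) := by
        apply mul_le_mul_of_nonneg_left hZe (by positivity)
    _ ≤ 18 * ((48*(N:ℝ)) * (48*(N:ℝ))) * X ^ (-ε) := by
        apply mul_le_mul_of_nonneg_right _ (le_of_lt hXeps_pos)
        apply mul_le_mul_of_nonneg_left hX4 (by norm_num)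
    _ = 41472 * (X ^ (-ε)) * (N:ℝ)^2 := by ring
  -- put everything together
  rw [hBadEq, hBoxEq, Set.ncard_image_of_injective _ e.injective,
    Set.ncard_image_of_injective _ e.injective, hBox'pi, ncard_pi, ← hm]
  have hcast : (Bad'.ncard : ℝ) ≤
      (m:ℝ) * ((badR.ncard:ℝ) * (N:ℝ) ^ (m-1))
      + ((∑ q ∈ (Finset.univ : Finset ((Fin (d-1) ⊕ Fin d) × (Fin (d-1) ⊕ Fin d))),
          (B q).ncard : ℕ) : ℝ) := by
    have h1 : (Bad'.ncard : ℝ) ≤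
        ((∑ k ∈ (Finset.univ : Finset (Fin (d-1) ⊕ Fin d)), (A k).ncard : ℕ) : ℝ)
        + ((∑ q ∈ (Finset.univ : Finset ((Fin (d-1) ⊕ Fin d) × (Fin (d-1) ⊕ Fin d))),
            (B q).ncard : ℕ) : ℝ) := by
      exact_mod_cast hcard_le
    have h2 : ((∑ k ∈ (Finset.univ : Finset (Fin (d-1) ⊕ Fin d)), (A k).ncard : ℕ) : ℝ)
        ≤ (m:ℝ) * ((badR.ncard:ℝ) * (N:ℝ) ^ (m-1)) := by
      exact_mod_cast hsumA
    linarith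
  have hNm : (N:ℝ) * (N:ℝ)^(m-1) = (N:ℝ)^m := by
    rw [← pow_succ']
    congr 1
    omega
  have hT1R : (m:ℝ) * ((badR.ncard:ℝ) * (N:ℝ) ^ (m-1)) ≤
      432 * (m:ℝ) * (X ^ (-ε)) * (N:ℝ)^m := by
    have hmnn : (0:ℝ) ≤ (m:ℝ) := Nat.cast_nonneg _
    have hpow : (0:ℝ) ≤ (N:ℝ)^(m-1) := by positivity
    calc (m:ℝ) * ((badR.ncard:ℝ) * (N:ℝ) ^ (m-1))
        ≤ (m:ℝ) * ((432 * (X ^ (-ε)) * (N:ℝ)) * (N:ℝ) ^ (m-1)) := by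
          apply mul_le_mul_of_nonneg_left _ hmnn
          exact mul_le_mul_of_nonneg_right hn1 hpow
    _ = 432 * (m:ℝ) * (X ^ (-ε)) * ((N:ℝ) * (N:ℝ)^(m-1)) := by ring
    _ = 432 * (m:ℝ) * (X ^ (-ε)) * (N:ℝ)^m := by rw [hNm]
  have hT2R : ((∑ q ∈ (Finset.univ : Finset ((Fin (d-1) ⊕ Fin d) × (Fin (d-1) ⊕ Fin d))),
      (B q).ncard : ℕ) : ℝ) ≤ 41472 * (m:ℝ)^2 * (X ^ (-ε)) * (N:ℝ)^m := by
    rcases Nat.lt_or_ge m 2 with hm2 | hm2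
    · have hm1' : m = 1 := by omega
      rw [hsumB0 hm1']
      simp only [Nat.cast_zero]
      positivity
    · have hNm2 : (N:ℝ)^2 * (N:ℝ)^(m-2) = (N:ℝ)^m := by
        rw [← pow_add]
        congr 1
        omega
      have h1 : ((∑ q ∈ (Finset.univ : Finset ((Fin (d-1) ⊕ Fin d) × (Fin (d-1) ⊕ Fin d))),
          (B q).ncard : ℕ) : ℝ) ≤ (m:ℝ) * (m:ℝ) * ((badP.ncard:ℝ) * (N:ℝ) ^ (m-2)) := by
        exact_mod_cast hsumB
      have hpow : (0:ℝ) ≤ (N:ℝ)^(m-2) := by positivity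
      have hmm : (0:ℝ) ≤ (m:ℝ) * (m:ℝ) := by positivity
      calc _ ≤ (m:ℝ) * (m:ℝ) * ((badP.ncard:ℝ) * (N:ℝ) ^ (m-2)) := h1
      _ ≤ (m:ℝ) * (m:ℝ) * ((41472 * (X ^ (-ε)) * (N:ℝ)^2) * (N:ℝ) ^ (m-2)) := by
          apply mul_le_mul_of_nonneg_left _ hmm
          exact mul_le_mul_of_nonneg_right hn2 hpow
      _ = 41472 * ((m:ℝ)*(m:ℝ)) * (X ^ (-ε)) * ((N:ℝ)^2 * (N:ℝ)^(m-2)) := by ring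
      _ = 41472 * (m:ℝ)^2 * (X ^ (-ε)) * (N:ℝ)^m := by rw [hNm2]; ring
  have hm2d : (m:ℝ) ≤ 2*(d:ℝ) := by
    have : m ≤ 2*d := by omega
    exact_mod_cast this
  have hd1 : (1:ℝ) ≤ (d:ℝ) := by exact_mod_cast hd
  have hfinal : 432 * (m:ℝ) + 41472 * (m:ℝ)^2 ≤ 1000000 * (d:ℝ)^2 := by
    nlinarith [sq_nonneg ((m:ℝ) - 2*(d:ℝ)), Nat.cast_nonneg (α := ℝ) m]
  have hNmnn : (0:ℝ) ≤ (N:ℝ)^m := by positivity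
  calc (Bad'.ncard : ℝ)
      ≤ (m:ℝ) * ((badR.ncard:ℝ) * (N:ℝ) ^ (m-1))
        + ((∑ q ∈ (Finset.univ : Finset ((Fin (d-1) ⊕ Fin d) × (Fin (d-1) ⊕ Fin d))),
            (B q).ncard : ℕ) : ℝ) := hcast
  _ ≤ 432 * (m:ℝ) * (X ^ (-ε)) * (N:ℝ)^m + 41472 * (m:ℝ)^2 * (X ^ (-ε)) * (N:ℝ)^m :=
      add_le_add hT1R hT2R
  _ = (432 * (m:ℝ) + 41472 * (m:ℝ)^2) * ((X ^ (-ε)) * (N:ℝ)^m) := by ring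
  _ ≤ (1000000 * (d:ℝ)^2) * ((X ^ (-ε)) * (N:ℝ)^m) := by
      apply mul_le_mul_of_nonneg_right hfinal
      positivity
  _ = 1000000 * (d:ℝ)^2 * X ^ (-ε) * (((N^m : ℕ)):ℝ) := by
      push_cast
      ring
end
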